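/- Let R be a principal ideal domain, let C be a finite projective chain complex over RΓ which is an R-homology n-sphere and an algebraic homotopy representation over R, and let H ∈ F be such that C is tight at every K ∈ F with (H) < (K) and n := n(H) ≥ 0. Define the splitting quotient S_H C as the cokernel of the map ⊕ C(K) → C(H), summed over all G-maps f : G/H → G/K with K ∈ F and (H) < (K), i.e. S_H C is C(H) modulo the sum of the images of all such induced maps C(f). Then H_{n+1}(S_H C) = 0. -/

import Mathlib

open CategoryTheory CategoryTheory.Limits Opposite

noncomputable section

namespace OrbitPaper

variable (G : Type) [Group G] (F : Set (Subgroup G)) (R : Type) [CommRing R]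

/-- The conjugate subgroup `gHg⁻¹` of `H`. -/
def conjSub (g : G) (H : Subgroup G) : Subgroup G := H.map (MulAut.conj g).toMonoidHom

/-- `(H) ≤ (K)` : some conjugate of `H` is contained in `K`. -/
def Subconj (H K : Subgroup G) : Prop := ∃ g : G, conjSub G g H ≤ K

/-- `(H) < (K)` : `(H) ≤ (K)` but not `(K) ≤ (H)`. -/
def SubconjLT (H K : Subgroup G) : Prop := Subconj G H K ∧ ¬ Subconj G K H

/-- `F` is a family of subgroups closed under conjugation and under taking subgroups. -/
def IsClosedFamily : Prop :=
  (∀ (g : G) (H : Subgroup G), H ∈ F → conjSub G g H ∈ F) ∧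
    (∀ H K : Subgroup G, H ≤ K → K ∈ F → H ∈ F)

/-- A super class function defined on `F`: it is constant on conjugacy classes and
takes the value `-1` outside of `F`. -/
def IsSuperClass (n : Subgroup G → ℤ) : Prop :=
  (∀ (g : G) (H : Subgroup G), n (conjSub G g H) = n H) ∧ (∀ H : Subgroup G, H ∉ F → n H = -1)

/-- Objects of the orbit category `Or_F G` : orbits `G/K` with `K ∈ F`. -/
structure OrbitObj : Type where
  grp : Subgroup G
  mem : grp ∈ F

variable {G F}

/-- The orbit category: morphisms `G/K → G/L` are the `G`-equivariant maps. -/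
instance : Category (OrbitObj G F) where
  Hom A B := { f : G ⧸ A.grp → G ⧸ B.grp // ∀ (g : G) (x : G ⧸ A.grp), f (g • x) = g • f x }
  id A := ⟨fun x => x, fun _ _ => rfl⟩
  comp f g := ⟨fun x => g.1 (f.1 x), fun a x => by
    show g.1 (f.1 (a • x)) = a • g.1 (f.1 x)
    rw [f.2, g.2]⟩

/-- The canonical projection `G/H → G/K` for `H ≤ K`, as a morphism of the orbit category. -/
def projMor (A B : OrbitObj G F) (h : A.grp ≤ B.grp) : A ⟶ B :=
  ⟨Quotient.map' id (fun a b hab => by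
      rw [QuotientGroup.leftRel_apply] at hab ⊢
      exact h hab),
   fun g x => by
      induction x using Quotient.inductionOn' with
      | h a => rfl⟩

lemma projMor_comp (A B C' : OrbitObj G F) (h1 : A.grp ≤ B.grp) (h2 : B.grp ≤ C'.grp) :
    projMor A C' (h1.trans h2) = projMor A B h1 ≫ projMor B C' h2 := by
  apply Subtype.ext
  funext x
  induction x using Quotient.inductionOn' with
  | h a => rfl

variable (G F) in
/-- The category of `RΓ`-modules: contravariant functors from the orbit category to `R`-modules. -/
abbrev OrbMod := (OrbitObj G F)ᵒᵖ ⥤ ModuleCat.{0} R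

variable {R}

/-- The free `RΓ`-module on the family of orbits `G/b i`; evaluated at `G/A` it is the free
`R`-module on `⨿ᵢ (G/b i)^A = ⨿ᵢ Hom(G/A, G/b i)`. -/
def freeOn {ι : Type} (b : ι → OrbitObj G F) : OrbMod G F R where
  obj A := ModuleCat.of R ((Σ i : ι, (A.unop ⟶ b i)) →₀ R)
  map {A B} f := ModuleCat.ofHom (Finsupp.lmapDomain R R (fun x => ⟨x.1, f.unop ≫ x.2⟩))
  map_id A := by
    have h : (fun x : (Σ i : ι, (A.unop ⟶ b i)) =>
        ((⟨x.1, (𝟙 A : A ⟶ A).unop ≫ x.2⟩ : Σ i : ι, (A.unop ⟶ b i)))) = _root_.id := by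
      funext x
      cases x with
      | mk i g => simp
    apply ModuleCat.hom_ext
    show Finsupp.lmapDomain R R _ = _
    rw [h, Finsupp.lmapDomain_id]
    rfl
  map_comp {A B C} f g := by
    have h : (fun x : (Σ i : ι, (A.unop ⟶ b i)) =>
          ((⟨x.1, (f ≫ g).unop ≫ x.2⟩ : Σ i : ι, (C.unop ⟶ b i)))) =
        (fun x : (Σ i : ι, (B.unop ⟶ b i)) =>
          ((⟨x.1, g.unop ≫ x.2⟩ : Σ i : ι, (C.unop ⟶ b i)))) ∘
        (fun x : (Σ i : ι, (A.unop ⟶ b i)) =>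
          ((⟨x.1, f.unop ≫ x.2⟩ : Σ i : ι, (B.unop ⟶ b i)))) := by
      funext x
      cases x with
      | mk i h => simp
    apply ModuleCat.hom_ext
    show Finsupp.lmapDomain R R _ = _
    rw [h, Finsupp.lmapDomain_comp]
    rfl

/-- The morphism of free modules induced by a reindexing map `u : ι' → ι`. -/
def freeOnMap {ι' ι : Type} (u : ι' → ι) (b : ι → OrbitObj G F) :
    (freeOn (R := R) (fun j => b (u j))) ⟶ freeOn (R := R) b where
  app A := ModuleCat.ofHom (Finsupp.lmapDomain R R (fun x => ⟨u x.1, x.2⟩))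
  naturality {A B} f := by
    apply ModuleCat.hom_ext
    show (Finsupp.lmapDomain R R _).comp (Finsupp.lmapDomain R R _) =
      (Finsupp.lmapDomain R R _).comp (Finsupp.lmapDomain R R _)
    rw [← Finsupp.lmapDomain_comp, ← Finsupp.lmapDomain_comp]
    rfl

variable (R) in
/-- An `RΓ`-module is free if it is isomorphic to a direct sum of modules `R[(G/K)^?]`. -/
def IsFreeMod (M : OrbMod G F R) : Prop :=
  ∃ (ι : Type) (b : ι → OrbitObj G F), Nonempty (M ≅ freeOn b)

variable (R) in
/-- A finitely generated free `RΓ`-module. -/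
def IsFinFreeMod (M : OrbMod G F R) : Prop :=
  ∃ (k : ℕ) (b : Fin k → OrbitObj G F), Nonempty (M ≅ freeOn b)

variable (R) in
/-- An `RΓ`-module is projective if it is a direct summand of a free module. -/
def IsProjMod (M : OrbMod G F R) : Prop :=
  ∃ (P : OrbMod G F R) (i : M ⟶ P) (r : P ⟶ M), IsFreeMod R P ∧ i ≫ r = 𝟙 M

variable (R) in
/-- A finitely generated projective `RΓ`-module: a direct summand of a f.g. free module. -/
def IsFinProjMod (M : OrbMod G F R) : Prop :=
  ∃ (P : OrbMod G F R) (i : M ⟶ P) (r : P ⟶ M), IsFinFreeMod R P ∧ i ≫ r = 𝟙 M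

variable (R) in
/-- A finitely generated `RΓ`-module: a quotient of a f.g. free module. -/
def IsFGMod (M : OrbMod G F R) : Prop :=
  ∃ (k : ℕ) (b : Fin k → OrbitObj G F) (π : freeOn b ⟶ M),
    ∀ A : (OrbitObj G F)ᵒᵖ, Function.Surjective (π.app A)

variable (G F R) in
/-- (Nonnegatively graded) chain complexes of `RΓ`-modules. -/
abbrev OrbCx := ChainComplex (OrbMod G F R) ℕ

variable (R) in
/-- The complex is zero above some dimension. -/
def IsBoundedCx (C : OrbCx G F R) : Prop := ∃ n : ℕ, ∀ i : ℕ, n < i → IsZero (C.X i)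

variable (R) in
/-- A finite free chain complex of `RΓ`-modules. -/
def IsFiniteFreeCx (C : OrbCx G F R) : Prop := IsBoundedCx R C ∧ ∀ i, IsFinFreeMod R (C.X i)

variable (R) in
/-- A finite projective chain complex of `RΓ`-modules. -/
def IsFiniteProjCx (C : OrbCx G F R) : Prop := IsBoundedCx R C ∧ ∀ i, IsFinProjMod R (C.X i)

/-- Evaluation of a chain complex of `RΓ`-modules at an orbit `G/A`; this is the complex
`C(A)` of `R`-modules. -/
def evalCx (C : OrbCx G F R) (A : OrbitObj G F) : ChainComplex (ModuleCat.{0} R) ℕ where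
  X i := (C.X i).obj (op A)
  d i j := (C.d i j).app (op A)
  shape i j h := by
    show (C.d i j).app (op A) = 0
    rw [C.shape i j h]; simp
  d_comp_d' i j k _ _ := by
    show (C.d i j).app (op A) ≫ (C.d j k).app (op A) = 0
    rw [← NatTrans.comp_app, C.d_comp_d]; simp

/-- The chain map `C(f) : C(K) → C(H)` induced by a `G`-map `f : G/H → G/K`. -/
def evalMap (C : OrbCx G F R) {A B : OrbitObj G F} (f : A ⟶ B) :
    evalCx C B ⟶ evalCx C A where
  f i := (C.X i).map f.op
  comm' i j _ := (C.d i j).naturality f.op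

/-- `Dim C` at an object of the orbit category: the largest `d` with `C_d(A) ≠ 0`
(and `-1` if `C(A) = 0`). -/
def dimObj (C : OrbCx G F R) (A : OrbitObj G F) : ℤ :=
  sSup (insert (-1) {d : ℤ | ∃ i : ℕ, (i : ℤ) = d ∧ ¬ IsZero ((C.X i).obj (op A))})

open Classical in
/-- The dimension function `Dim C` as a super class function on all subgroups of `G`. -/
def dimFun (C : OrbCx G F R) (H : Subgroup G) : ℤ :=
  if h : H ∈ F then dimObj C ⟨H, h⟩ else -1

/-- The homological dimension of `C(A)` : the largest `d` with `H_d(C(A)) ≠ 0`. -/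
def hdimObj (C : OrbCx G F R) (A : OrbitObj G F) : ℤ :=
  sSup (insert (-1) {d : ℤ | ∃ i : ℕ, (i : ℤ) = d ∧ ¬ IsZero ((evalCx C A).homology i)})

/-- `C` is tight at `A` if `Dim C(A) = hdim C(A)`. -/
def TightAt (C : OrbCx G F R) (A : OrbitObj G F) : Prop := dimObj C A = hdimObj C A

variable (G F R) in
/-- The constant functor `R̲`. -/
def constR : OrbMod G F R := (Functor.const (OrbitObj G F)ᵒᵖ).obj (ModuleCat.of R R)

variable (R) in
/-- The augmented complex `⋯ → D_1 → D_0 → R → 0` of a complex of `R`-modules equipped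
with an augmentation `e`, with `R` placed in degree `0` (so degree `i+1` is old degree `i`). -/
def augmentR (D : ChainComplex (ModuleCat.{0} R) ℕ) (e : D.X 0 ⟶ ModuleCat.of R R)
    (he : D.d 1 0 ≫ e = 0) : ChainComplex (ModuleCat.{0} R) ℕ :=
  ChainComplex.of (fun n => match n with | 0 => ModuleCat.of R R | (k+1) => D.X k)
    (fun n => match n with | 0 => e | (k+1) => D.d (k+1) k)
    (fun n => match n with | 0 => he | (k+1) => D.d_comp_d _ _ _)

variable (R) in
/-- A complex of `R`-modules (already augmented) has the homology of an `nv`-sphere: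
homology `R` in degree `nv + 1` and zero elsewhere.  (Degree `d` of reduced homology
corresponds to degree `d+1` of the augmented complex.) -/
def SphereLike (D : ChainComplex (ModuleCat.{0} R) ℕ) (nv : ℤ) : Prop :=
  ∃ m : ℕ, (m : ℤ) = nv + 1 ∧ (∀ i : ℕ, i ≠ m → IsZero (D.homology i)) ∧
    Nonempty (D.homology m ≅ ModuleCat.of R R)

lemma eval_d_aug (C : OrbCx G F R) (ε : C.X 0 ⟶ constR G F R) (hε : C.d 1 0 ≫ ε = 0)
    (A : OrbitObj G F) :
    (evalCx C A).d 1 0 ≫ (ε.app (op A) : (C.X 0).obj (op A) ⟶ ModuleCat.of R R) = 0 := by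
  show (C.d 1 0).app (op A) ≫ ε.app (op A) = 0
  rw [← NatTrans.comp_app, hε]
  simp

/-- `C` is an (augmented) `R`-homology `n`-sphere: for every `K ∈ F` the reduced homology of
`C(K)` is that of an `n(K)`-sphere. -/
def IsHomologySphere (C : OrbCx G F R) (ε : C.X 0 ⟶ constR G F R) (hε : C.d 1 0 ≫ ε = 0)
    (n : Subgroup G → ℤ) : Prop :=
  ∀ A : OrbitObj G F,
    SphereLike R (augmentR R (evalCx C A) (ε.app (op A)) (eval_d_aug C ε hε A)) (n A.grp)

variable (G) in
/-- Condition (i): the dimension function is monotone. -/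
def CondI (n : Subgroup G → ℤ) : Prop :=
  ∀ H K : Subgroup G, Subconj G H K → n K ≤ n H

/-- Condition (ii): if `n(H) = n(K)` then every `G`-map `f : G/H → G/K` induces an
`R`-homology isomorphism `C(K) → C(H)`. -/
def CondII (C : OrbCx G F R) (n : Subgroup G → ℤ) : Prop :=
  ∀ (A B : OrbitObj G F) (f : A ⟶ B), n A.grp = n B.grp →
    ∀ i : ℕ, IsIso (HomologicalComplex.homologyMap (evalMap C f) i)

variable (G F) in
/-- Condition (iii): joins of subgroups realizing the same dimension stay in the
family with the same dimension. -/
def CondIII (n : Subgroup G → ℤ) : Prop :=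
  ∀ H K L : Subgroup G, H ∈ F → K ∈ F → L ∈ F → H ≤ K → H ≤ L →
    n H = n K → n H = n L → -1 < n H → (K ⊔ L ∈ F ∧ n (K ⊔ L) = n H)



/-- The subcomplex of a complex of `R`-modules determined by a compatible family of
submodules. -/
def subCx (D : ChainComplex (ModuleCat.{0} R) ℕ) (N : ∀ i, Submodule R (D.X i))
    (hN : ∀ i j, ∀ x ∈ N i, D.d i j x ∈ N j) : ChainComplex (ModuleCat.{0} R) ℕ where
  X i := ModuleCat.of R (N i)
  d i j := ModuleCat.ofHom ((D.d i j).hom.restrict (hN i j))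
  shape i j h := by
    ext x
    show D.d i j x.1 = 0
    rw [D.shape i j h]
    rfl
  d_comp_d' i j k _ _ := by
    ext x
    show D.d j k (D.d i j x.1) = 0
    exact DFunLike.congr_fun (congrArg ModuleCat.Hom.hom (D.d_comp_d i j k)) x.1

/-- The inclusion of subcomplexes induced by inclusions of submodules. -/
def subCxIncl (D : ChainComplex (ModuleCat.{0} R) ℕ) (N N' : ∀ i, Submodule R (D.X i))
    (hN : ∀ i j, ∀ x ∈ N i, D.d i j x ∈ N j) (hN' : ∀ i j, ∀ x ∈ N' i, D.d i j x ∈ N' j)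
    (h : ∀ i, N' i ≤ N i) : subCx D N' hN' ⟶ subCx D N hN where
  f i := ModuleCat.ofHom (Submodule.inclusion (h i))
  comm' i j _ := by
    ext x
    apply Subtype.ext
    rfl

/-- The quotient complex of a complex of `R`-modules by a compatible family of submodules. -/
def subQuotCx (D : ChainComplex (ModuleCat.{0} R) ℕ) (N : ∀ i, Submodule R (D.X i))
    (hN : ∀ i j, ∀ x ∈ N i, D.d i j x ∈ N j) : ChainComplex (ModuleCat.{0} R) ℕ where
  X i := ModuleCat.of R ((D.X i) ⧸ N i)
  d i j := ModuleCat.ofHom (Submodule.mapQ (N i) (N j) (D.d i j).hom (fun x hx => hN i j x hx))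
  shape i j h := by
    apply ModuleCat.hom_ext
    refine Submodule.linearMap_qext _ ?_
    ext x
    simp only [LinearMap.comp_apply, Submodule.mkQ_apply, Submodule.mapQ_apply,
      D.shape i j h]
    rfl
  d_comp_d' i j k _ _ := by
    apply ModuleCat.hom_ext
    refine Submodule.linearMap_qext _ ?_
    ext x
    have hx : D.d j k (D.d i j x) = 0 :=
      DFunLike.congr_fun (congrArg ModuleCat.Hom.hom (D.d_comp_d i j k)) x
    show (Submodule.mapQ (N j) (N k) (D.d j k).hom (fun y hy => hN j k y hy))
        ((Submodule.mapQ (N i) (N j) (D.d i j).hom (fun y hy => hN i j y hy))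
          (Submodule.Quotient.mk x)) = 0
    rw [Submodule.mapQ_apply, Submodule.mapQ_apply, hx]
    rfl

/-- The restriction of an augmentation to a subcomplex. -/
def subAug (D : ChainComplex (ModuleCat.{0} R) ℕ) (N : ∀ i, Submodule R (D.X i))
    (hN : ∀ i j, ∀ x ∈ N i, D.d i j x ∈ N j) (e : D.X 0 ⟶ ModuleCat.of R R) :
    (subCx D N hN).X 0 ⟶ ModuleCat.of R R :=
  ModuleCat.ofHom (e.hom.comp (N 0).subtype)

lemma subAug_d (D : ChainComplex (ModuleCat.{0} R) ℕ) (N : ∀ i, Submodule R (D.X i))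
    (hN : ∀ i j, ∀ x ∈ N i, D.d i j x ∈ N j) (e : D.X 0 ⟶ ModuleCat.of R R)
    (he : D.d 1 0 ≫ e = 0) :
    (subCx D N hN).d 1 0 ≫ subAug D N hN e = 0 := by
  ext x
  show e (D.d 1 0 x.1) = 0
  have := DFunLike.congr_fun (congrArg ModuleCat.Hom.hom he) x.1
  simpa using this

lemma mapRange_le (C : OrbCx G F R) {A B : OrbitObj G F} (f : A ⟶ B) (i j : ℕ) :
    Submodule.map ((evalCx C A).d i j).hom (LinearMap.range ((C.X i).map f.op).hom) ≤
      LinearMap.range ((C.X j).map f.op).hom := by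
  rintro x ⟨y, ⟨z, rfl⟩, rfl⟩
  refine ⟨(C.d i j).app (op B) z, ?_⟩
  exact (DFunLike.congr_fun (congrArg ModuleCat.Hom.hom ((C.d i j).naturality f.op)) z).symm

/-- The sum of the images of the maps `C(f_k) : C(B_k) → C(A)` in degree `i`. -/
def rangeN (C : OrbCx G F R) (A : OrbitObj G F) {κ : Type} (Bs : κ → OrbitObj G F)
    (fs : ∀ k, A ⟶ Bs k) (i : ℕ) : Submodule R ((evalCx C A).X i) :=
  ⨆ k, LinearMap.range ((C.X i).map (fs k).op).hom

lemma rangeN_compat (C : OrbCx G F R) (A : OrbitObj G F) {κ : Type} (Bs : κ → OrbitObj G F)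
    (fs : ∀ k, A ⟶ Bs k) :
    ∀ i j, ∀ x ∈ rangeN C A Bs fs i, (evalCx C A).d i j x ∈ rangeN C A Bs fs j := by
  intro i j x hx
  have hmap : Submodule.map ((evalCx C A).d i j).hom (rangeN C A Bs fs i) ≤ rangeN C A Bs fs j := by
    rw [rangeN, Submodule.map_iSup]
    exact iSup_le fun k => (mapRange_le C (fs k) i j).trans
      (le_iSup (fun k' => LinearMap.range ((C.X j).map (fs k').op).hom) k)
  exact hmap ⟨x, hx, rfl⟩

lemma range_le_of_factor (C : OrbCx G F R) {A B B' : OrbitObj G F} (f : A ⟶ B) (g : B ⟶ B')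
    (i : ℕ) :
    LinearMap.range ((C.X i).map (f ≫ g).op).hom ≤ LinearMap.range ((C.X i).map f.op).hom := by
  rintro x ⟨z, rfl⟩
  refine ⟨(C.X i).map g.op z, ?_⟩
  have h : (C.X i).map (f ≫ g).op = (C.X i).map g.op ≫ (C.X i).map f.op := by
    rw [op_comp, Functor.map_comp]
  rw [h]
  simp

/-- The product of two `RΓ`-modules. -/
def prodF (M N : OrbMod G F R) : OrbMod G F R where
  obj A := ModuleCat.of R (M.obj A × N.obj A)
  map {A B} f := ModuleCat.ofHom (LinearMap.prodMap (M.map f).hom (N.map f).hom)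
  map_id A := by
    apply ModuleCat.hom_ext
    show LinearMap.prodMap (M.map (𝟙 A)).hom (N.map (𝟙 A)).hom = _
    rw [M.map_id, N.map_id]
    exact LinearMap.prodMap_id ..
  map_comp {A B C} f g := by
    apply ModuleCat.hom_ext
    show LinearMap.prodMap (M.map (f ≫ g)).hom (N.map (f ≫ g)).hom = _
    rw [M.map_comp, N.map_comp]
    exact (LinearMap.prodMap_comp ..).symm



/-- Evaluation of a chain map of complexes of `RΓ`-modules at an orbit. -/
def evalCxMap {C D : OrbCx G F R} (phi : C ⟶ D) (A : OrbitObj G F) :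
    evalCx C A ⟶ evalCx D A where
  f i := (phi.f i).app (op A)
  comm' i j _ := by
    show (phi.f i).app (op A) ≫ (D.d i j).app (op A) =
      (C.d i j).app (op A) ≫ (phi.f j).app (op A)
    rw [← NatTrans.comp_app, ← NatTrans.comp_app, phi.comm i j]

/-- The cokernel complex of a chain map of complexes of `R`-modules. -/
def cokerCx {D E : ChainComplex (ModuleCat.{0} R) ℕ} (phi : E ⟶ D) :
    ChainComplex (ModuleCat.{0} R) ℕ :=
  subQuotCx D (fun i => LinearMap.range (phi.f i).hom) (fun i j x hx => by
    obtain ⟨y, rfl⟩ := hx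
    exact ⟨E.d i j y, (DFunLike.congr_fun (congrArg ModuleCat.Hom.hom (phi.comm i j)) y).symm⟩)

variable (G) in
/-- Indices of summands of type `(K)` with `(H) ≤ (K)`, for `H = A₀.grp`. -/
abbrev SubIdx (A₀ : OrbitObj G F) {κ : Type} (bb : κ → OrbitObj G F) : Type :=
  {j : κ // Subconj G A₀.grp (bb j).grp}

variable (G) in
/-- Indices of summands of type `(K)` with `(H) < (K)`, for `H = A₀.grp`. -/
abbrev SubIdxLT (A₀ : OrbitObj G F) {κ : Type} (bb : κ → OrbitObj G F) : Type :=
  {j : κ // SubconjLT G A₀.grp (bb j).grp}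






/-! ### Auxiliary lemmas: conjugation and subconjugation -/

section ConjLemmas

variable {G : Type} [Group G] {F : Set (Subgroup G)}

lemma mem_conjSub {g : G} {H : Subgroup G} {x : G} :
    x ∈ conjSub G g H ↔ g⁻¹ * x * g ∈ H := by
  constructor
  · rintro ⟨y, hy, rfl⟩
    replace hy : y ∈ H := hy
    show g⁻¹ * (g * y * g⁻¹) * g ∈ H
    convert hy using 1
    group
  · intro h
    refine ⟨g⁻¹ * x * g, h, ?_⟩
    show g * (g⁻¹ * x * g) * g⁻¹ = x
    group

lemma conjSub_conjSub (g g' : G) (H : Subgroup G) :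
    conjSub G g (conjSub G g' H) = conjSub G (g * g') H := by
  ext x
  rw [mem_conjSub, mem_conjSub, mem_conjSub]
  constructor <;> intro h <;>
    · convert h using 1
      group

lemma conjSub_one (H : Subgroup G) : conjSub G 1 H = H := by
  ext x
  rw [mem_conjSub]
  simp

lemma conjSub_mono (g : G) {H K : Subgroup G} (h : H ≤ K) :
    conjSub G g H ≤ conjSub G g K := by
  intro x hx
  rw [mem_conjSub] at hx ⊢
  exact h hx

lemma subconj_refl (H : Subgroup G) : Subconj G H H :=
  ⟨1, le_of_eq (conjSub_one H)⟩

lemma subconj_of_le {H K : Subgroup G} (h : H ≤ K) : Subconj G H K :=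
  ⟨1, (conjSub_one H).le.trans h⟩

lemma subconj_trans {H K L : Subgroup G} (h1 : Subconj G H K) (h2 : Subconj G K L) :
    Subconj G H L := by
  obtain ⟨g, hg⟩ := h1
  obtain ⟨g', hg'⟩ := h2
  exact ⟨g' * g, by
    rw [← conjSub_conjSub]
    exact le_trans (conjSub_mono g' hg) hg'⟩

lemma subconj_conjSub_left (g : G) (H K : Subgroup G) :
    Subconj G (conjSub G g H) K ↔ Subconj G H K := by
  constructor
  · intro h
    refine subconj_trans ?_ h
    exact ⟨g, le_rfl⟩
  · intro h
    refine subconj_trans ?_ h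
    exact ⟨g⁻¹, by rw [conjSub_conjSub, inv_mul_cancel, conjSub_one]⟩

lemma subconjLT_congr_right {H K K' : Subgroup G} (hsc : Subconj G K K') (hsc' : Subconj G K' K)
    (h : SubconjLT G H K) : SubconjLT G H K' := by
  refine ⟨subconj_trans h.1 hsc, fun hc => h.2 (subconj_trans hsc hc)⟩

lemma subconjLT_of_le_of_subconjLT {H K L : Subgroup G} (hKL : K ≤ L)
    (h : SubconjLT G H K) : SubconjLT G H L :=
  ⟨subconj_trans h.1 (subconj_of_le hKL), fun hc => h.2 (subconj_trans (subconj_of_le hKL) hc)⟩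

end ConjLemmas

/-! ### Auxiliary lemmas: the orbit category -/

section OrbitLemmas

variable {G : Type} [Group G] {F : Set (Subgroup G)}

lemma quot_smul_mk {H : Subgroup G} (g a : G) :
    (g • (QuotientGroup.mk a : G ⧸ H)) = QuotientGroup.mk (g * a) :=
  MulAction.Quotient.smul_mk H g a

lemma quot_one_smul {H : Subgroup G} (g : G) :
    (g • (QuotientGroup.mk 1 : G ⧸ H)) = QuotientGroup.mk g := by
  rw [quot_smul_mk, mul_one]

lemma morph_apply_mk {A B : OrbitObj G F} (f : A ⟶ B) (g : G) :
    f.1 (QuotientGroup.mk g) = g • f.1 (QuotientGroup.mk 1) := by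
  rw [← f.2, quot_one_smul]

lemma projMor_apply_mk {A B : OrbitObj G F} (h : A.grp ≤ B.grp) (g : G) :
    (projMor A B h).1 (QuotientGroup.mk g) = QuotientGroup.mk g := rfl

lemma projMor_surjective {A B : OrbitObj G F} (h : A.grp ≤ B.grp) :
    Function.Surjective (projMor A B h).1 := by
  intro x
  induction x using Quotient.inductionOn' with
  | h a => exact ⟨QuotientGroup.mk a, rfl⟩

lemma projMor_cancel {A B X : OrbitObj G F} (h : A.grp ≤ B.grp) (f f' : B ⟶ X)
    (heq : projMor A B h ≫ f = projMor A B h ≫ f') : f = f' := by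
  apply Subtype.ext
  funext x
  obtain ⟨y, rfl⟩ := projMor_surjective h x
  exact congrFun (congrArg Subtype.val heq) y

/-- A morphism whose "stabilizer" contains a given subgroup `J ⊇ A.grp` factors
through the projection `A → G/J`, provided the coset condition holds. -/
def cosetMor (J X : OrbitObj G F) (a : G) (ha : J.grp ≤ conjSub G a X.grp) :
    J ⟶ X :=
  ⟨Quotient.map' (fun x => x * a) (fun x y hxy => by
      rw [QuotientGroup.leftRel_apply] at hxy ⊢
      have := ha hxy
      rw [mem_conjSub] at this
      convert this using 1
      group),
   fun g x => by
      induction x using Quotient.inductionOn' with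
      | h b =>
        have hb : (Quotient.mk'' b : G ⧸ J.grp) = QuotientGroup.mk b := rfl
        rw [hb, quot_smul_mk]
        show QuotientGroup.mk ((g * b) * a) = g • QuotientGroup.mk (b * a)
        rw [quot_smul_mk, mul_assoc]⟩

lemma cosetMor_apply (J X : OrbitObj G F) (a : G) (ha : J.grp ≤ conjSub G a X.grp) (g : G) :
    (cosetMor J X a ha).1 (QuotientGroup.mk g) = QuotientGroup.mk (g * a) := rfl

/-- Membership characterization for cosets. -/
lemma qg_eq {H : Subgroup G} {a b : G} :
    (QuotientGroup.mk a : G ⧸ H) = QuotientGroup.mk b ↔ a⁻¹ * b ∈ H :=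
  QuotientGroup.eq

lemma stab_le {W X : OrbitObj G F} (f : W ⟶ X) (a : G)
    (ha : f.1 (QuotientGroup.mk 1) = QuotientGroup.mk a) :
    W.grp ≤ conjSub G a X.grp := by
  intro x hx
  rw [mem_conjSub]
  have h1 : (QuotientGroup.mk x : G ⧸ W.grp) = QuotientGroup.mk 1 := by
    rw [qg_eq]; simpa using (inv_mem hx)
  have h2 := morph_apply_mk f x
  rw [h1, ha, quot_smul_mk] at h2
  have h3 : (QuotientGroup.mk a : G ⧸ X.grp) = QuotientGroup.mk (x * a) := h2
  rw [qg_eq] at h3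
  convert h3 using 1
  group

/-- Every morphism `A ⟶ B` in the orbit category factors as a projection onto a
conjugate of `B.grp` containing `A.grp`, followed by another morphism. -/
lemma exists_factorization (hF : IsClosedFamily G F) {A B : OrbitObj G F} (f : A ⟶ B) :
    ∃ (K : OrbitObj G F) (a : G) (_ : K.grp = conjSub G a B.grp)
      (hle : A.grp ≤ K.grp) (φ : K ⟶ B), f = projMor A K hle ≫ φ := by
  set q := f.1 (QuotientGroup.mk 1) with hq
  obtain ⟨a, ha⟩ : ∃ a : G, q = QuotientGroup.mk a := ⟨q.out, (QuotientGroup.out_eq' q).symm⟩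
  have hKF : conjSub G a B.grp ∈ F := hF.1 a B.grp B.mem
  set K : OrbitObj G F := ⟨conjSub G a B.grp, hKF⟩ with hK
  have hle : A.grp ≤ K.grp := stab_le f a (by rw [← hq, ha])
  refine ⟨K, a, rfl, hle, cosetMor K B a le_rfl, ?_⟩
  apply Subtype.ext
  funext x
  induction x using Quotient.inductionOn' with
  | h g =>
    have hg : (Quotient.mk'' g : G ⧸ A.grp) = QuotientGroup.mk g := rfl
    show f.1 (Quotient.mk'' g) = (cosetMor K B a le_rfl).1 ((projMor A K hle).1 (Quotient.mk'' g))
    rw [hg, projMor_apply_mk, cosetMor_apply, morph_apply_mk f g, ← hq, ha, quot_smul_mk]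

/-- If a morphism factors through two projections, it factors through the join. -/
lemma factor_through_join {W K L X : OrbitObj G F} (hWK : W.grp ≤ K.grp) (hWL : W.grp ≤ L.grp)
    (φ : K ⟶ X) (ψ : L ⟶ X) (heq : projMor W K hWK ≫ φ = projMor W L hWL ≫ ψ)
    (J : OrbitObj G F) (hJ : J.grp = K.grp ⊔ L.grp) :
    ∃ χ : J ⟶ X, φ = projMor K J (hJ ▸ le_sup_left) ≫ χ := by
  set q := φ.1 (QuotientGroup.mk 1) with hq
  obtain ⟨a, ha⟩ : ∃ a : G, q = QuotientGroup.mk a := ⟨q.out, (QuotientGroup.out_eq' q).symm⟩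
  have haK : K.grp ≤ conjSub G a X.grp := stab_le φ a (by rw [← hq, ha])
  have hψ1 : ψ.1 (QuotientGroup.mk 1) = QuotientGroup.mk a := by
    have e1 : φ.1 ((projMor W K hWK).1 (QuotientGroup.mk 1)) =
        ψ.1 ((projMor W L hWL).1 (QuotientGroup.mk 1)) :=
      congrFun (congrArg Subtype.val heq) (QuotientGroup.mk 1)
    rw [projMor_apply_mk, projMor_apply_mk] at e1
    rw [← e1, ← hq, ha]
  have haL : L.grp ≤ conjSub G a X.grp := stab_le ψ a hψ1
  have haJ : J.grp ≤ conjSub G a X.grp := by rw [hJ]; exact sup_le haK haL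
  refine ⟨cosetMor J X a haJ, ?_⟩
  apply Subtype.ext
  funext x
  induction x using Quotient.inductionOn' with
  | h g =>
    have hg : (Quotient.mk'' g : G ⧸ K.grp) = QuotientGroup.mk g := rfl
    show φ.1 (Quotient.mk'' g) = (cosetMor J X a haJ).1
      ((projMor K J (hJ ▸ le_sup_left)).1 (Quotient.mk'' g))
    rw [hg, projMor_apply_mk, cosetMor_apply, morph_apply_mk φ g, ← hq, ha, quot_smul_mk]

end OrbitLemmas


/-! ### Free and projective `RΓ`-modules: injectivity and factorization of images -/

section FreeLemmas

variable {G : Type} [Group G] {F : Set (Subgroup G)} {R : Type} [CommRing R]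

lemma surj_cancel {W K X : OrbitObj G F} (p : W ⟶ K) (hp : Function.Surjective p.1)
    (f f' : K ⟶ X) (heq : p ≫ f = p ≫ f') : f = f' := by
  apply Subtype.ext
  funext x
  obtain ⟨y, rfl⟩ := hp x
  exact congrFun (congrArg Subtype.val heq) y

/-- The reindexing map on basis elements induced by precomposition. -/
def compMap {ι : Type} (b : ι → OrbitObj G F) {W K : OrbitObj G F} (p : W ⟶ K) :
    (Σ i : ι, (K ⟶ b i)) → (Σ i : ι, (W ⟶ b i)) :=
  fun x => ⟨x.1, p ≫ x.2⟩

lemma compMap_injective {ι : Type} (b : ι → OrbitObj G F) {W K : OrbitObj G F} (p : W ⟶ K)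
    (hp : Function.Surjective p.1) : Function.Injective (compMap b p) := by
  rintro ⟨i, φ⟩ ⟨j, ψ⟩ h
  obtain ⟨hij, hh⟩ := Sigma.mk.inj_iff.1 h
  subst hij
  have := eq_of_heq hh
  rw [surj_cancel p hp φ ψ this]

lemma freeOn_map_eq {ι : Type} (b : ι → OrbitObj G F) {W K : OrbitObj G F} (p : W ⟶ K) :
    ((freeOn (R := R) b).map p.op).hom = Finsupp.lmapDomain R R (compMap b p) := rfl

lemma freeOn_map_injective {ι : Type} (b : ι → OrbitObj G F) {W K : OrbitObj G F} (p : W ⟶ K)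
    (hp : Function.Surjective p.1) :
    Function.Injective ((freeOn (R := R) b).map p.op) := by
  have h : ((freeOn (R := R) b).map p.op).hom =
    Finsupp.lmapDomain R R (compMap b p) := rfl
  show Function.Injective (((freeOn (R := R) b).map p.op).hom : _ → _)
  rw [h]
  intro x y hxy
  exact Finsupp.mapDomain_injective (compMap_injective b p hp) hxy

/-- The pushout lemma for free modules: if the image of `β` under the projection-induced
map lies in the sum of images from the `Js t`, then `β` lies in the sum of the images
from the joins `Cs t`. -/
lemma PL_free {ι : Type} (b : ι → OrbitObj G F) {W K : OrbitObj G F} (hWK : W.grp ≤ K.grp)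
    {r : ℕ} (Js : Fin r → OrbitObj G F) (hWJ : ∀ t, W.grp ≤ (Js t).grp)
    (Cs : Fin r → OrbitObj G F) (hKC : ∀ t, K.grp ≤ (Cs t).grp)
    (hC : ∀ t, (Cs t).grp = K.grp ⊔ (Js t).grp)
    (β : (freeOn (R := R) b).obj (op K)) (α : ∀ t, (freeOn (R := R) b).obj (op (Js t)))
    (heq : (freeOn (R := R) b).map (projMor W K hWK).op β =
      ∑ t, (freeOn (R := R) b).map (projMor W (Js t) (hWJ t)).op (α t)) :
    β ∈ ⨆ t, LinearMap.range ((freeOn (R := R) b).map (projMor K (Cs t) (hKC t)).op).hom := by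
  classical
  set βf : (Σ i : ι, (K ⟶ b i)) →₀ R := β with hβf
  have hβ : βf = ∑ σ ∈ βf.support, Finsupp.single σ (βf σ) := (Finsupp.sum_single βf).symm
  rw [hβ]
  apply Submodule.sum_mem
  intro σ hσ
  -- evaluate the equation at the point `compMap b (projMor W K hWK) σ`
  set lhsf : (Σ i : ι, (W ⟶ b i)) →₀ R := (freeOn (R := R) b).map (projMor W K hWK).op β
    with hlhsf
  have hcoef : lhsf (compMap b (projMor W K hWK) σ) = βf σ := by
    rw [hlhsf]
    show (Finsupp.mapDomain (compMap b (projMor W K hWK)) βf) (compMap b (projMor W K hWK) σ)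
      = βf σ
    exact Finsupp.mapDomain_apply (compMap_injective b _ (projMor_surjective hWK)) βf σ
  set rhsf : Fin r → ((Σ i : ι, (W ⟶ b i)) →₀ R) :=
    fun t => (freeOn (R := R) b).map (projMor W (Js t) (hWJ t)).op (α t) with hrhsf
  have heq' : lhsf = ∑ t, rhsf t := heq
  have hne : (∑ t, rhsf t) (compMap b (projMor W K hWK) σ) ≠ 0 := by
    rw [← heq', hcoef]
    exact Finsupp.mem_support_iff.1 hσ
  rw [Finsupp.finset_sum_apply] at hne
  obtain ⟨t, -, ht⟩ := Finset.exists_ne_zero_of_sum_ne_zero hne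
  have hmem : compMap b (projMor W K hWK) σ ∈ (rhsf t).support :=
    Finsupp.mem_support_iff.2 ht
  have hrt : rhsf t = Finsupp.mapDomain (compMap b (projMor W (Js t) (hWJ t)))
      ((α t : (Σ i : ι, ((Js t) ⟶ b i)) →₀ R)) := rfl
  rw [hrt] at hmem
  obtain ⟨τ, -, hτ⟩ := Finset.mem_image.1 (Finsupp.mapDomain_support hmem)
  -- now factor through the join
  obtain ⟨iσ, φσ⟩ := σ
  obtain ⟨iτ, ψ⟩ := τ
  obtain ⟨hij, hh⟩ := Sigma.mk.inj_iff.1 hτ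
  subst hij
  have heq2 : projMor W (Js t) (hWJ t) ≫ ψ = projMor W K hWK ≫ φσ := eq_of_heq hh
  obtain ⟨χ, hχ⟩ := factor_through_join hWK (hWJ t) φσ ψ heq2.symm (Cs t) (hC t)
  apply Submodule.mem_iSup_of_mem t
  refine ⟨Finsupp.single ⟨iτ, χ⟩ (βf ⟨iτ, φσ⟩), ?_⟩
  show Finsupp.mapDomain (compMap b (projMor K (Cs t) (hKC t)))
    (Finsupp.single ⟨iτ, χ⟩ (βf ⟨iτ, φσ⟩)) = _
  rw [Finsupp.mapDomain_single, hχ]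
  rfl

/-- Split injections into free modules, from finite projectivity. -/
lemma exists_retract {M : OrbMod G F R} (hM : IsFinProjMod R M) :
    ∃ (k : ℕ) (b : Fin k → OrbitObj G F) (i : M ⟶ freeOn b) (ρ : freeOn b ⟶ M),
      i ≫ ρ = 𝟙 M := by
  obtain ⟨P, i₀, r₀, ⟨k, b, ⟨e⟩⟩, hcomp⟩ := hM
  refine ⟨k, b, i₀ ≫ e.hom, e.inv ≫ r₀, ?_⟩
  rw [Category.assoc, ← Category.assoc e.hom, e.hom_inv_id, Category.id_comp, hcomp]

lemma nat_app_apply {M N : OrbMod G F R} (η : M ⟶ N) {W K : (OrbitObj G F)ᵒᵖ} (p : W ⟶ K)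
    (x : M.obj W) : η.app K (M.map p x) = N.map p (η.app W x) :=
  (ConcreteCategory.congr_hom (η.naturality p) x)

lemma retract_app {M N : OrbMod G F R} (i : M ⟶ N) (ρ : N ⟶ M) (h : i ≫ ρ = 𝟙 M)
    (W : (OrbitObj G F)ᵒᵖ) (x : M.obj W) : ρ.app W (i.app W x) = x := by
  have := ConcreteCategory.congr_hom (congrArg (fun (η : M ⟶ M) => η.app W) h) x
  simpa using this

/-- Injectivity of the map induced by a surjective morphism, for finite projective modules. -/
lemma proj_map_injective {M : OrbMod G F R} (hM : IsFinProjMod R M) {W K : OrbitObj G F}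
    (p : W ⟶ K) (hp : Function.Surjective p.1) : Function.Injective (M.map p.op) := by
  obtain ⟨k, b, i, ρ, hcomp⟩ := exists_retract hM
  intro x y hxy
  have h1 : (freeOn b).map p.op (i.app (op K) x) = (freeOn b).map p.op (i.app (op K) y) := by
    rw [← nat_app_apply i p.op x, ← nat_app_apply i p.op y, hxy]
  have h2 := freeOn_map_injective b p hp h1
  rw [← retract_app i ρ hcomp (op K) x, ← retract_app i ρ hcomp (op K) y, h2]

/-- The pushout lemma for finite projective modules. -/
lemma proj_PL {M : OrbMod G F R} (hM : IsFinProjMod R M) {W K : OrbitObj G F}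
    (hWK : W.grp ≤ K.grp)
    {r : ℕ} (Js : Fin r → OrbitObj G F) (hWJ : ∀ t, W.grp ≤ (Js t).grp)
    (Cs : Fin r → OrbitObj G F) (hKC : ∀ t, K.grp ≤ (Cs t).grp)
    (hC : ∀ t, (Cs t).grp = K.grp ⊔ (Js t).grp)
    (β : M.obj (op K)) (α : ∀ t, M.obj (op (Js t)))
    (heq : M.map (projMor W K hWK).op β =
      ∑ t, M.map (projMor W (Js t) (hWJ t)).op (α t)) :
    β ∈ ⨆ t, LinearMap.range (M.map (projMor K (Cs t) (hKC t)).op).hom := by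
  obtain ⟨k, b, i, ρ, hcomp⟩ := exists_retract hM
  have h1 : (freeOn b).map (projMor W K hWK).op (i.app (op K) β) =
      ∑ t, (freeOn b).map (projMor W (Js t) (hWJ t)).op (i.app (op (Js t)) (α t)) := by
    rw [← nat_app_apply i _ β, heq, map_sum]
    congr 1
    funext t
    rw [nat_app_apply i _ (α t)]
  have h2 := PL_free b hWK Js hWJ Cs hKC hC (i.app (op K) β) (fun t => i.app (op (Js t)) (α t)) h1
  rw [← retract_app i ρ hcomp (op K) β]
  refine Submodule.iSup_induction (motive := fun x => ρ.app (op K) x ∈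
      ⨆ t, LinearMap.range (M.map (projMor K (Cs t) (hKC t)).op).hom) _ h2 ?_ (by simp) ?_
  · rintro t x ⟨w, rfl⟩
    apply Submodule.mem_iSup_of_mem t
    refine ⟨ρ.app (op (Cs t)) w, ?_⟩
    rw [← nat_app_apply ρ _ w]
  · intro x y hx hy
    rw [map_add]
    exact Submodule.add_mem _ hx hy

end FreeLemmas


/-! ### Homology interface for chain complexes of modules -/

section HomologyInterface

variable {R : Type} [CommRing R]

lemma mc_comp_apply {M N U : ModuleCat.{0} R} (f : M ⟶ N) (g : N ⟶ U) (x : M) :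
    (f ≫ g) x = g (f x) := by
  rfl

/-- The short complex `K.X (j+1) ⟶ K.X j ⟶ K.X (j-1)` (with `ℕ`-subtraction). -/
abbrev SCat (K : ChainComplex (ModuleCat.{0} R) ℕ) (j : ℕ) : ShortComplex (ModuleCat.{0} R) :=
  K.sc' (j + 1) j (j - 1)

lemma scat_next (j : ℕ) : (ComplexShape.down ℕ).next j = j - 1 := by
  cases j with
  | zero => exact ChainComplex.next_nat_zero
  | succ k => exact ChainComplex.next_nat_succ k

/-- The canonical isomorphism between the mathlib short complex and ours. -/
noncomputable def scIso (K : ChainComplex (ModuleCat.{0} R) ℕ) (j : ℕ) :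
    K.sc j ≅ SCat K j :=
  K.isoSc' (j + 1) j (j - 1) (by simp [ChainComplex.prev]) (scat_next j)

lemma isZero_homology_iff_exact (K : ChainComplex (ModuleCat.{0} R) ℕ) (j : ℕ) :
    IsZero (K.homology j) ↔ (SCat K j).Exact := by
  rw [← ShortComplex.exact_iff_of_iso (scIso K j)]
  exact (ShortComplex.exact_iff_isZero_homology _).symm

lemma exact_concrete_iff (K : ChainComplex (ModuleCat.{0} R) ℕ) (j : ℕ) :
    (SCat K j).Exact ↔ ∀ x : K.X j, K.d j (j-1) x = 0 → ∃ y : K.X (j+1), K.d (j+1) j y = x :=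
  ShortComplex.moduleCat_exact_iff _

/-- Homology vanishing gives concrete exactness. -/
lemma isZero_homology_concrete (K : ChainComplex (ModuleCat.{0} R) ℕ) (j : ℕ)
    (h : IsZero (K.homology j)) :
    ∀ x : K.X j, K.d j (j-1) x = 0 → ∃ y : K.X (j+1), K.d (j+1) j y = x :=
  (exact_concrete_iff K j).1 ((isZero_homology_iff_exact K j).1 h)

lemma isZero_homology_of_concrete (K : ChainComplex (ModuleCat.{0} R) ℕ) (j : ℕ)
    (h : ∀ x : K.X j, K.d j (j-1) x = 0 → ∃ y : K.X (j+1), K.d (j+1) j y = x) :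
    IsZero (K.homology j) :=
  (isZero_homology_iff_exact K j).2 ((exact_concrete_iff K j).2 h)

section SCIso

variable {S₁ S₂ : ShortComplex (ModuleCat.{0} R)} (ψ : S₁ ⟶ S₂)

/-- The element of `S.cycles` determined by a concrete cycle. -/
noncomputable def mkCyc (S : ShortComplex (ModuleCat.{0} R)) (z : S.X₂) (hz : S.g z = 0) :
    S.cycles :=
  S.moduleCatCyclesIso.inv ⟨z, hz⟩

lemma iCycles_mkCyc (S : ShortComplex (ModuleCat.{0} R)) (z : S.X₂) (hz : S.g z = 0) :
    S.iCycles (mkCyc S z hz) = z := by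
  have := ConcreteCategory.congr_hom (S.moduleCatCyclesIso_inv_iCycles) (⟨z, hz⟩ : LinearMap.ker S.g.hom)
  erw [mc_comp_apply] at this
  exact this

lemma mkCyc_iCycles (S : ShortComplex (ModuleCat.{0} R)) (c : S.cycles)
    (h : S.g (S.iCycles c) = 0) : mkCyc S (S.iCycles c) h = c := by
  have hp : ((S.moduleCatCyclesIso.hom c : ModuleCat.of R (LinearMap.ker S.g.hom))).1
      = S.iCycles c := by
    have := ConcreteCategory.congr_hom S.moduleCatCyclesIso_hom_i c
    rw [mc_comp_apply] at this
    exact this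
  have h2 : (⟨S.iCycles c, h⟩ : LinearMap.ker S.g.hom) =
      (S.moduleCatCyclesIso.hom c : ModuleCat.of R (LinearMap.ker S.g.hom)) :=
    Subtype.ext hp.symm
  show S.moduleCatCyclesIso.inv _ = c
  rw [h2]
  have := ConcreteCategory.congr_hom S.moduleCatCyclesIso.hom_inv_id c
  rw [mc_comp_apply] at this
  exact this

lemma π_mkCyc_eq_zero_iff (S : ShortComplex (ModuleCat.{0} R)) (z : S.X₂) (hz : S.g z = 0) :
    S.homologyπ (mkCyc S z hz) = 0 ↔ ∃ w, S.f w = z := by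
  have hnat : S.homologyπ (mkCyc S z hz) =
      S.moduleCatHomologyIso.inv (S.moduleCatLeftHomologyData.π (⟨z, hz⟩ : LinearMap.ker S.g.hom)) :=
    ConcreteCategory.congr_hom (S.moduleCatCyclesIso_inv_π) (⟨z, hz⟩ : LinearMap.ker S.g.hom)
  constructor
  · intro h
    rw [show S.homologyπ (mkCyc S z hz) = _ from hnat] at h
    have hinj : Function.Injective S.moduleCatHomologyIso.inv := by
      rw [← ModuleCat.mono_iff_injective]
      infer_instance
    have h0 : (S.moduleCatLeftHomologyData.π (⟨z, hz⟩ : LinearMap.ker S.g.hom)) = 0 := by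
      apply hinj
      rw [h, map_zero]
    obtain ⟨w, hw⟩ := (Submodule.Quotient.mk_eq_zero _ (x := (⟨z, hz⟩ : LinearMap.ker S.g.hom))).1 h0
    exact ⟨w, congrArg Subtype.val hw⟩
  · rintro ⟨w, hw⟩
    rw [show S.homologyπ (mkCyc S z hz) = _ from hnat]
    have h0 : (S.moduleCatLeftHomologyData.π (⟨z, hz⟩ : LinearMap.ker S.g.hom)) = 0 := by
      exact (Submodule.Quotient.mk_eq_zero _ (x := (⟨z, hz⟩ : LinearMap.ker S.g.hom))).2
        ⟨w, Subtype.ext hw⟩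
    rw [h0, map_zero]

/-- Surjectivity on concrete homology classes, from `IsIso` of the homology map. -/
lemma sc_hiso_surj (hiso : IsIso (ShortComplex.homologyMap ψ)) (z : S₂.X₂) (hz : S₂.g z = 0) :
    ∃ u : S₁.X₂, S₁.g u = 0 ∧ ∃ w : S₂.X₁, ψ.τ₂ u - z = S₂.f w := by
  have hepi : Function.Surjective (ShortComplex.homologyMap ψ) := by
    rw [← ModuleCat.epi_iff_surjective]
    infer_instance
  have hπ1 : Function.Surjective S₁.homologyπ := by
    rw [← ModuleCat.epi_iff_surjective]
    infer_instance
  obtain ⟨h₁, hh₁⟩ := hepi (S₂.homologyπ (mkCyc S₂ z hz))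
  obtain ⟨c₁, hc₁⟩ := hπ1 h₁
  refine ⟨S₁.iCycles c₁, ?_, ?_⟩
  · have := ConcreteCategory.congr_hom S₁.iCycles_g c₁
    rw [mc_comp_apply] at this
    simpa using this
  · set y := ShortComplex.cyclesMap ψ c₁ - mkCyc S₂ z hz with hy
    have hyc : S₂.iCycles y = ψ.τ₂ (S₁.iCycles c₁) - z := by
      rw [hy, map_sub, iCycles_mkCyc]
      congr 1
      have := ConcreteCategory.congr_hom (ShortComplex.cyclesMap_i ψ) c₁
      rw [mc_comp_apply, mc_comp_apply] at this
      exact this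
    have hgy : S₂.g (S₂.iCycles y) = 0 := by
      have := ConcreteCategory.congr_hom S₂.iCycles_g y
      rw [mc_comp_apply] at this
      simpa using this
    have hrep : y = mkCyc S₂ (S₂.iCycles y) hgy := (mkCyc_iCycles _ _ _).symm
    have hπy : S₂.homologyπ y = 0 := by
      rw [hy, map_sub]
      have hnat := ConcreteCategory.congr_hom (ShortComplex.homologyπ_naturality ψ) c₁
      rw [mc_comp_apply, mc_comp_apply] at hnat
      rw [← hnat, hc₁, hh₁, sub_self]
    rw [hrep] at hπy
    obtain ⟨w, hw⟩ := (π_mkCyc_eq_zero_iff _ _ _).1 hπy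
    rw [hyc] at hw
    exact ⟨w, hw.symm⟩

/-- Injectivity on concrete homology classes, from `IsIso` of the homology map. -/
lemma sc_hiso_inj (hiso : IsIso (ShortComplex.homologyMap ψ)) (u : S₁.X₂) (hu : S₁.g u = 0)
    (hb : ∃ w, ψ.τ₂ u = S₂.f w) : ∃ v, S₁.f v = u := by
  obtain ⟨w, hw⟩ := hb
  have hmono : Function.Injective (ShortComplex.homologyMap ψ) := by
    rw [← ModuleCat.mono_iff_injective]
    infer_instance
  have hyc : S₂.iCycles (ShortComplex.cyclesMap ψ (mkCyc S₁ u hu)) = ψ.τ₂ u := by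
    have := ConcreteCategory.congr_hom (ShortComplex.cyclesMap_i ψ) (mkCyc S₁ u hu)
    rw [mc_comp_apply, mc_comp_apply] at this
    rw [this, iCycles_mkCyc]
  have hgy : S₂.g (S₂.iCycles (ShortComplex.cyclesMap ψ (mkCyc S₁ u hu))) = 0 := by
    have := ConcreteCategory.congr_hom S₂.iCycles_g (ShortComplex.cyclesMap ψ (mkCyc S₁ u hu))
    rw [mc_comp_apply] at this
    simpa using this
  have hrep : ShortComplex.cyclesMap ψ (mkCyc S₁ u hu) =
      mkCyc S₂ (S₂.iCycles (ShortComplex.cyclesMap ψ (mkCyc S₁ u hu))) hgy :=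
    (mkCyc_iCycles _ _ _).symm
  have hπ0 : ShortComplex.homologyMap ψ (S₁.homologyπ (mkCyc S₁ u hu)) = 0 := by
    have hnat := ConcreteCategory.congr_hom (ShortComplex.homologyπ_naturality ψ) (mkCyc S₁ u hu)
    rw [mc_comp_apply, mc_comp_apply] at hnat
    rw [hnat, hrep]
    rw [π_mkCyc_eq_zero_iff]
    exact ⟨w, by rw [hyc] at *; exact hw.symm⟩
  have := hmono (by rw [hπ0, map_zero] : ShortComplex.homologyMap ψ (S₁.homologyπ (mkCyc S₁ u hu))
    = ShortComplex.homologyMap ψ 0)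
  obtain ⟨v, hv⟩ := (π_mkCyc_eq_zero_iff _ _ _).1 this
  exact ⟨v, hv⟩

end SCIso

end HomologyInterface


section HomologyBridge

variable {R : Type} [CommRing R]

/-- The short complex map. -/
abbrev SCmap {K L : ChainComplex (ModuleCat.{0} R) ℕ} (φ : K ⟶ L) (j : ℕ) :
    SCat K j ⟶ SCat L j :=
  (HomologicalComplex.shortComplexFunctor' (ModuleCat.{0} R) _ (j+1) j (j-1)).map φ

noncomputable def homologySCatIso (K : ChainComplex (ModuleCat.{0} R) ℕ) (j : ℕ) :
    K.homology j ≅ (SCat K j).homology :=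
  (Iso.refl _ : K.homology j ≅ (K.sc j).homology) ≪≫ ShortComplex.homologyMapIso (scIso K j)

lemma isIso_SCmap_homologyMap {K L : ChainComplex (ModuleCat.{0} R) ℕ} (φ : K ⟶ L) (j : ℕ)
    (h : IsIso (HomologicalComplex.homologyMap φ j)) :
    IsIso (ShortComplex.homologyMap (SCmap φ j)) := by
  set HF := ShortComplex.homologyFunctor (ModuleCat.{0} R) with hHF
  set ν := (HomologicalComplex.natIsoSc' (ModuleCat.{0} R) (ComplexShape.down ℕ)
    (j+1) j (j-1) (by simp [ChainComplex.prev]) (scat_next j)) with hν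
  have hnat := ν.hom.naturality φ
  have hH := congrArg HF.map hnat
  rw [HF.map_comp, HF.map_comp] at hH
  have hK : IsIso (HF.map (ν.hom.app K)) := by
    have : IsIso (ν.hom.app K) := inferInstance
    infer_instance
  have hL : IsIso (HF.map (ν.hom.app L)) := by
    have : IsIso (ν.hom.app L) := inferInstance
    infer_instance
  have hφ : IsIso (HF.map ((HomologicalComplex.shortComplexFunctor (ModuleCat.{0} R)
      (ComplexShape.down ℕ) j).map φ)) := by
    have h1 : HF.map ((HomologicalComplex.shortComplexFunctor (ModuleCat.{0} R)
        (ComplexShape.down ℕ) j).map φ) = HomologicalComplex.homologyMap φ j := rfl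
    rw [h1]
    exact h
  have heq : HF.map (SCmap φ j) = inv (HF.map (ν.hom.app K)) ≫
      (HF.map ((HomologicalComplex.shortComplexFunctor (ModuleCat.{0} R)
        (ComplexShape.down ℕ) j).map φ) ≫ HF.map (ν.hom.app L)) := by
    rw [IsIso.eq_inv_comp]
    exact hH.symm
  have hfin : IsIso (HF.map (SCmap φ j)) := by
    rw [heq]
    infer_instance
  exact hfin

end HomologyBridge

section AugLemmas

variable {G : Type} [Group G] {F : Set (Subgroup G)} {R : Type} [CommRing R]
variable (D : ChainComplex (ModuleCat.{0} R) ℕ) (e : D.X 0 ⟶ ModuleCat.of R R)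
  (he : D.d 1 0 ≫ e = 0)

lemma aug_d_succ (k : ℕ) : (augmentR R D e he).d (k+2) (k+1) = D.d (k+1) k :=
  by exact ChainComplex.of_d (V := ModuleCat.{0} R) (α := ℕ)
        (fun n => match n with | 0 => ModuleCat.of R R | (k+1) => D.X k)
        (fun n => match n with | 0 => e | (k+1) => D.d (k+1) k) (k+1)

lemma aug_d_one : (augmentR R D e he).d 1 0 = e :=
  by exact ChainComplex.of_d (V := ModuleCat.{0} R) (α := ℕ)
        (fun n => match n with | 0 => ModuleCat.of R R | (k+1) => D.X k)
        (fun n => match n with | 0 => e | (k+1) => D.d (k+1) k) 0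

/-- Comparison of short complexes of the augmented and unaugmented complexes. -/
noncomputable def augSCiso (k : ℕ) :
    SCat (augmentR R D e he) (k+2) ≅ SCat D (k+1) :=
  ShortComplex.isoMk (Iso.refl _) (Iso.refl _) (Iso.refl _)
    (by
      show 𝟙 _ ≫ D.d (k+2) (k+1) = (augmentR R D e he).d (k+3) (k+2) ≫ 𝟙 _
      rw [Category.comp_id, Category.id_comp]
      exact (aug_d_succ D e he (k+1)).symm)
    (by
      show 𝟙 _ ≫ D.d (k+1) k = (augmentR R D e he).d (k+2) (k+1) ≫ 𝟙 _
      rw [Category.comp_id, Category.id_comp]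
      exact (aug_d_succ D e he k).symm)

lemma plain_isZero_of_aug (k : ℕ)
    (h : IsZero ((augmentR R D e he).homology (k+2))) : IsZero (D.homology (k+1)) := by
  rw [isZero_homology_iff_exact] at h ⊢
  exact (ShortComplex.exact_iff_of_iso (augSCiso D e he k)).1 h

/-- If the augmented complex is exact in degree `1` and has homology `R` in degree `0`,
with `R` a domain, then the unaugmented complex is exact in degree `0`. -/
lemma plain_isZero_zero_of_aug [IsDomain R]
    (hex1 : IsZero ((augmentR R D e he).homology 1))
    (hiso0 : Nonempty ((augmentR R D e he).homology 0 ≅ ModuleCat.of R R)) :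
    IsZero (D.homology 0) := by
  set A := augmentR R D e he with hA
  -- first : the augmentation has trivial range
  have hg0 : (SCat A 0).g = 0 := A.shape 0 0 (by simp)
  have hrange : ∀ x : D.X 0, e x = 0 := by
    obtain ⟨θ₀⟩ := hiso0
    have θ : (SCat A 0).moduleCatLeftHomologyData.H ≅ ModuleCat.of R R :=
      ((SCat A 0).moduleCatHomologyIso).symm ≪≫ (homologySCatIso A 0).symm ≪≫ θ₀
    set S := SCat A 0 with hS
    have hker : ∀ x : S.X₂, S.g x = 0 := fun x => by rw [hg0]; rfl
    set ψ : S.X₂ →ₗ[R] S.moduleCatLeftHomologyData.H :=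
      (LinearMap.range S.moduleCatToCycles).mkQ.comp
        (LinearMap.codRestrict (LinearMap.ker S.g.hom) LinearMap.id hker) with hψ
    set ψ' : R →ₗ[R] S.moduleCatLeftHomologyData.H :=
      ψ.comp (LinearMap.id : R →ₗ[R] S.X₂) with hψ'
    have hψ'_surj : Function.Surjective ψ' := by
      intro q
      obtain ⟨⟨x, hx⟩, rfl⟩ := Submodule.Quotient.mk_surjective _ q
      exact ⟨x, rfl⟩
    have hψ'_e : ∀ x : D.X 0, ψ' (e x) = 0 := by
      intro x
      show Submodule.Quotient.mk _ = 0
      rw [Submodule.Quotient.mk_eq_zero]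
      exact ⟨x, Subtype.ext (ConcreteCategory.congr_hom (aug_d_one D e he) x)⟩
    set eqv := θ.toLinearEquiv with heqv
    intro x
    set u : R := eqv (ψ' 1) with hu'
    have hx0 : eqv (ψ' (show R from e x)) = 0 := by rw [show ψ' (show R from e x) = 0 from hψ'_e x, map_zero]
    have hlin : ψ' (show R from e x) = (show R from e x) • ψ' 1 := by
      rw [← map_smul, smul_eq_mul, mul_one]
    have hmul : (show R from e x) * u = 0 := by
      have h7 : eqv (ψ' (show R from e x)) = (show R from e x) • u := by
        rw [hlin, map_smul]
      rw [hx0] at h7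
      rw [← smul_eq_mul]
      exact h7.symm
    by_cases hu : u = 0
    · exfalso
      have hψ'1 : ψ' 1 = 0 := by
        refine eqv.map_eq_zero_iff.1 ?_
        rw [← hu']
        exact hu
      have hzero : ∀ r : R, ψ' r = 0 := fun r => by
        rw [show ψ' r = r • ψ' 1 by rw [← map_smul, smul_eq_mul, mul_one], hψ'1, smul_zero]
      obtain ⟨r, hr⟩ := hψ'_surj (eqv.symm (show ↑(ModuleCat.of R R) from (1:R)))
      have h4 := congrArg eqv hr
      rw [eqv.apply_symm_apply, hzero r, map_zero] at h4
      exact one_ne_zero (α := R) (show (1:R) = 0 from h4.symm)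
    · rcases mul_eq_zero.1 hmul with h | h
      · exact h
      · exact absurd h hu
  -- now exactness
  apply isZero_homology_of_concrete
  intro x _
  have hexact := isZero_homology_concrete A 1 hex1 x (by
    show A.d 1 0 x = 0
    rw [aug_d_one]
    exact hrange x)
  obtain ⟨y, hy⟩ := hexact
  refine ⟨y, ?_⟩
  rw [← aug_d_succ D e he 0]
  exact hy

end AugLemmas


/-! ### Dimension and tightness lemmas -/

section DimLemmas

variable {G : Type} [Group G] {F : Set (Subgroup G)} {R : Type} [CommRing R]

lemma isZero_eq_zero {M : ModuleCat.{0} R} (h : IsZero M) (x : M) : x = 0 := by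
  have h1 : (𝟙 M : M ⟶ M) = 0 := h.eq_of_src _ _
  have h2 := ConcreteCategory.congr_hom h1 x
  simpa using h2

variable {C : OrbCx G F R} {eps : C.X 0 ⟶ constR G F R} {heps : C.d 1 0 ≫ eps = 0}
  {n : Subgroup G → ℤ}

lemma sphere_n_ge (W : OrbitObj G F)
    (hsphW : SphereLike R (augmentR R (evalCx C W) (eps.app (op W)) (eval_d_aug C eps heps W))
      (n W.grp)) : -1 ≤ n W.grp := by
  obtain ⟨m', hm', -, -⟩ := hsphW
  have : (0:ℤ) ≤ (m' : ℤ) := Int.ofNat_nonneg m'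
  omega

lemma homology_vanish_above [IsDomain R] (W : OrbitObj G F)
    (hsphW : SphereLike R (augmentR R (evalCx C W) (eps.app (op W)) (eval_d_aug C eps heps W))
      (n W.grp)) :
    ∀ j : ℕ, n W.grp < (j : ℤ) → IsZero ((evalCx C W).homology j) := by
  obtain ⟨m', hm', hvan, hiso⟩ := hsphW
  intro j hj
  cases j with
  | zero =>
    -- then n W.grp = -1 and m' = 0
    have hn1 : n W.grp = -1 := by
      have h0 : (0:ℤ) ≤ (m' : ℤ) := Int.ofNat_nonneg m'
      omega
    have hm0 : m' = 0 := by
      have : (m' : ℤ) = 0 := by omega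
      exact_mod_cast this
    subst hm0
    exact plain_isZero_zero_of_aug _ _ _ (hvan 1 (by omega)) hiso
  | succ k =>
    apply plain_isZero_of_aug
    apply hvan (k+2)
    intro hc
    subst hc
    push_cast at hm'
    omega

/-- For a tight orbit, the chain modules vanish above `n`. -/
lemma tight_vanish_module [IsDomain R] (hfin : IsFiniteProjCx R C) (W : OrbitObj G F)
    (hsphW : SphereLike R (augmentR R (evalCx C W) (eps.app (op W)) (eval_d_aug C eps heps W))
      (n W.grp))
    (htW : TightAt C W) (j : ℕ) (hj : n W.grp < (j : ℤ)) :
    IsZero ((C.X j).obj (op W)) := by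
  have hge := sphere_n_ge (heps := heps) W hsphW
  -- hdimObj ≤ n W.grp
  have hhdim : hdimObj C W ≤ n W.grp := by
    apply csSup_le (by simp)
    rintro d hd
    rcases Set.mem_insert_iff.1 hd with rfl | ⟨i, rfl, hnz⟩
    · exact hge
    · by_contra hlt
      push_neg at hlt
      exact hnz (homology_vanish_above (heps := heps) W hsphW i hlt)
  have hdim : dimObj C W ≤ n W.grp := htW.trans_le hhdim
  -- conclude
  by_contra hnz
  have hmem : (j : ℤ) ∈ insert (-1 : ℤ)
      {d : ℤ | ∃ i : ℕ, (i : ℤ) = d ∧ ¬ IsZero ((C.X i).obj (op W))} :=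
    Set.mem_insert_iff.2 (Or.inr ⟨j, rfl, hnz⟩)
  have hbdd : BddAbove (insert (-1 : ℤ)
      {d : ℤ | ∃ i : ℕ, (i : ℤ) = d ∧ ¬ IsZero ((C.X i).obj (op W))}) := by
    obtain ⟨nb, hnb⟩ := hfin.1
    refine ⟨max (nb : ℤ) (-1), ?_⟩
    rintro d hd
    rcases Set.mem_insert_iff.1 hd with rfl | ⟨i, rfl, hnz'⟩
    · exact le_max_right _ _
    · refine le_trans ?_ (le_max_left _ _)
      by_contra hlt
      push_neg at hlt
      have : nb < i := by exact_mod_cast hlt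
      exact hnz' ((Functor.isZero_iff _).1 (hnb i this) _)
  have : (j : ℤ) ≤ dimObj C W := le_csSup hbdd hmem
  omega

end DimLemmas


/-! ### The core induction -/

section Core

variable {G : Type} [Group G] {F : Set (Subgroup G)} {R : Type} [CommRing R]
variable (C : OrbCx G F R) (n : Subgroup G → ℤ) (A : OrbitObj G F) (m : ℕ)

/-- The family of relevant strictly larger subgroups. -/
def KKs : Set (Subgroup G) :=
  {K | K ∈ F ∧ A.grp ≤ K ∧ ¬ Subconj G K A.grp ∧ n K = (m : ℤ)}

/-- Packages over `W`: subgroups of the family `KKs` containing `W.grp`. -/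
def OverP (W : OrbitObj G F) : Type :=
  {K : OrbitObj G F // K.grp ∈ KKs n A m ∧ W.grp ≤ K.grp}

variable {n A m}

/-- The projection morphism attached to a package. -/
def pmor {W : OrbitObj G F} (o : OverP n A m W) : W ⟶ o.1 := projMor W o.1 o.2.2

/-- Sum of the images of the maps induced by the projections in the list. -/
def Rng (W : OrbitObj G F) (l : List (OverP n A m W)) (i : ℕ) :
    Submodule R ((C.X i).obj (op W)) :=
  (l.map (fun o => LinearMap.range ((C.X i).map (pmor o).op).hom)).sum

/-- Sum of the images of the cycles under the maps induced by the projections. -/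
def ZRng (W : OrbitObj G F) (l : List (OverP n A m W)) (i : ℕ) :
    Submodule R ((C.X i).obj (op W)) :=
  (l.map (fun o => Submodule.map ((C.X i).map (pmor o).op).hom
    (LinearMap.ker ((C.d i (i-1)).app (op o.1)).hom))).sum

lemma Rng_nil (W : OrbitObj G F) (i : ℕ) : Rng C W ([] : List (OverP n A m W)) i = ⊥ := rfl

lemma ZRng_nil (W : OrbitObj G F) (i : ℕ) : ZRng C W ([] : List (OverP n A m W)) i = ⊥ := rfl

lemma Rng_cons (W : OrbitObj G F) (o : OverP n A m W) (l : List (OverP n A m W)) (i : ℕ) :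
    Rng C W (o :: l) i = LinearMap.range ((C.X i).map (pmor o).op).hom ⊔ Rng C W l i := by
  rw [Rng, List.map_cons, List.sum_cons, Submodule.add_eq_sup]
  rfl

lemma ZRng_cons (W : OrbitObj G F) (o : OverP n A m W) (l : List (OverP n A m W)) (i : ℕ) :
    ZRng C W (o :: l) i = Submodule.map ((C.X i).map (pmor o).op).hom
      (LinearMap.ker ((C.d i (i-1)).app (op o.1)).hom) ⊔ ZRng C W l i := by
  rw [ZRng, List.map_cons, List.sum_cons, Submodule.add_eq_sup]
  rfl

/-! #### Elementwise lemmas -/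

lemma d_d_zero (W : OrbitObj G F) (i j k : ℕ) (x : (C.X i).obj (op W)) :
    (C.d j k).app (op W) ((C.d i j).app (op W) x) = 0 := by
  have h2 := congrArg (fun η : C.X i ⟶ C.X k => η.app (op W)) (C.d_comp_d i j k)
  simp only [NatTrans.comp_app] at h2
  have h3 := ConcreteCategory.congr_hom h2 x
  rw [mc_comp_apply] at h3
  simpa using h3

lemma d_nat {W X : OrbitObj G F} (f : W ⟶ X) (i j : ℕ) (x : (C.X i).obj (op X)) :
    (C.d i j).app (op W) ((C.X i).map f.op x) = (C.X j).map f.op ((C.d i j).app (op X) x) := by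
  have h := ConcreteCategory.congr_hom ((C.d i j).naturality f.op) x
  rw [mc_comp_apply, mc_comp_apply] at h
  exact h

lemma cm_comp {W X Y : OrbitObj G F} (f : W ⟶ X) (g : X ⟶ Y) (i : ℕ)
    (x : (C.X i).obj (op Y)) :
    (C.X i).map (f ≫ g).op x = (C.X i).map f.op ((C.X i).map g.op x) := by
  rw [op_comp, Functor.map_comp, mc_comp_apply]

lemma d_zero_zero (W : OrbitObj G F) (x : (C.X 0).obj (op W)) :
    (C.d 0 0).app (op W) x = 0 := by
  have h : C.d 0 0 = 0 := C.shape 0 0 (by simp)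
  rw [h]
  rfl

/-! #### Closure properties of the family -/

lemma kk_join (h3 : CondIII G F n) (hm : (m : ℤ) = n A.grp) {K L : Subgroup G}
    (hK : K ∈ KKs n A m) (hL : L ∈ KKs n A m) : K ⊔ L ∈ KKs n A m := by
  obtain ⟨hKF, hAK, hKnA, hKn⟩ := hK
  obtain ⟨hLF, hAL, hLnA, hLn⟩ := hL
  have hpos : -1 < n A.grp := by rw [← hm]; omega
  have h := h3 A.grp K L A.mem hKF hLF hAK hAL (by rw [← hm, hKn]) (by rw [← hm, hLn]) hpos
  exact ⟨h.1, le_trans hAK le_sup_left,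
    fun hc => hKnA (subconj_trans (subconj_of_le le_sup_left) hc), by rw [h.2, ← hm]⟩

/-- Big join of a nonempty list of packages. -/
def bigJ {W : OrbitObj G F} (o : OverP n A m W) (l : List (OverP n A m W)) : Subgroup G :=
  l.foldr (fun o' J => o'.1.grp ⊔ J) o.1.grp

lemma bigJ_mem (h3 : CondIII G F n) (hm : (m : ℤ) = n A.grp) {W : OrbitObj G F}
    (o : OverP n A m W) (l : List (OverP n A m W)) : bigJ o l ∈ KKs n A m := by
  induction l with
  | nil => exact o.2.1
  | cons o'' t ih => exact kk_join h3 hm o''.2.1 ih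

lemma le_bigJ_head {W : OrbitObj G F} (o : OverP n A m W) (l : List (OverP n A m W)) :
    o.1.grp ≤ bigJ o l := by
  induction l with
  | nil => exact le_rfl
  | cons o'' t ih => exact le_trans ih le_sup_right

lemma le_bigJ_mem {W : OrbitObj G F} (o : OverP n A m W) (l : List (OverP n A m W)) :
    ∀ o' ∈ l, o'.1.grp ≤ bigJ o l := by
  induction l with
  | nil => intro o' h; exact absurd h (List.not_mem_nil (a := o'))
  | cons o'' t ih =>
    intro o' h
    rcases List.mem_cons.1 h with rfl | h'
    · exact le_sup_left
    · exact le_trans (ih o' h') le_sup_right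

/-- The big join as a package. -/
def bigJP (h3 : CondIII G F n) (hm : (m : ℤ) = n A.grp) {W : OrbitObj G F}
    (o : OverP n A m W) (l : List (OverP n A m W)) : OverP n A m W :=
  ⟨⟨bigJ o l, (bigJ_mem h3 hm o l).1⟩, bigJ_mem h3 hm o l,
    le_trans o.2.2 (le_bigJ_head o l)⟩

/-- The join of a package over `W` with another one, as a package over the first one. -/
def toJoin (h3 : CondIII G F n) (hm : (m : ℤ) = n A.grp) {W : OrbitObj G F}
    (o : OverP n A m W) (o' : OverP n A m W) : OverP n A m o.1 :=
  ⟨⟨o.1.grp ⊔ o'.1.grp, (kk_join h3 hm o.2.1 o'.2.1).1⟩, kk_join h3 hm o.2.1 o'.2.1,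
    le_sup_left⟩

/-! #### Concrete consequences of condition (II) -/

lemma surjC (h2 : CondII C n) {W X : OrbitObj G F} (f : W ⟶ X) (hnn : n W.grp = n X.grp)
    (j : ℕ) (z : (C.X j).obj (op W)) (hz : (C.d j (j-1)).app (op W) z = 0) :
    ∃ u : (C.X j).obj (op X), (C.d j (j-1)).app (op X) u = 0 ∧
      ∃ w : (C.X (j+1)).obj (op W),
        (C.X j).map f.op u - z = (C.d (j+1) j).app (op W) w := by
  have hiso := isIso_SCmap_homologyMap (evalMap C f) j (h2 W X f hnn j)
  exact sc_hiso_surj (SCmap (evalMap C f) j) hiso z hz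

lemma injC (h2 : CondII C n) {W X : OrbitObj G F} (f : W ⟶ X) (hnn : n W.grp = n X.grp)
    (j : ℕ) (u : (C.X j).obj (op X)) (hu : (C.d j (j-1)).app (op X) u = 0)
    (hb : ∃ w : (C.X (j+1)).obj (op W),
      (C.X j).map f.op u = (C.d (j+1) j).app (op W) w) :
    ∃ v : (C.X (j+1)).obj (op X), (C.d (j+1) j).app (op X) v = u := by
  have hiso := isIso_SCmap_homologyMap (evalMap C f) j (h2 W X f hnn j)
  exact sc_hiso_inj (SCmap (evalMap C f) j) hiso u hu hb

/-! #### Auxiliary membership lemmas -/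

lemma le_list_sum {M : Type} [AddCommGroup M] [Module R M] (l : List (Submodule R M))
    {p : Submodule R M} (hp : p ∈ l) : p ≤ l.sum := by
  induction l with
  | nil => exact absurd hp (List.not_mem_nil (a := p))
  | cons q t ih =>
    rw [List.sum_cons, Submodule.add_eq_sup]
    rcases List.mem_cons.1 hp with rfl | h'
    · exact le_sup_left
    · exact le_trans (ih h') le_sup_right

lemma list_sum_decomp {α : Type} {M : Type} [AddCommGroup M] [Module R M] (l : List α)
    (f : α → Submodule R M) (x : M) (hx : x ∈ (l.map f).sum) :
    ∃ g : Fin l.length → M, (∀ t, g t ∈ f (l.get t)) ∧ x = ∑ t, g t := by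
  induction l generalizing x with
  | nil =>
    refine ⟨fun t => t.elim0, fun t => t.elim0, ?_⟩
    have : x = 0 := by simpa using hx
    simp [this]
  | cons p t ih =>
    rw [List.map_cons, List.sum_cons, Submodule.add_eq_sup] at hx
    obtain ⟨a, ha, b, hb, rfl⟩ := Submodule.mem_sup.1 hx
    obtain ⟨g', hg', hbe⟩ := ih b hb
    refine ⟨Fin.cons a g', ?_, ?_⟩
    · intro t
      induction t using Fin.cases with
      | zero => simpa using ha
      | succ s => simpa using hg' s
    · show a + b = ∑ t1 : Fin (t.length + 1), Fin.cons a g' t1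
      rw [Fin.sum_cons, ← hbe]

lemma dRng (W : OrbitObj G F) (l : List (OverP n A m W)) {j : ℕ} (k : ℕ)
    {x : (C.X j).obj (op W)} (hx : x ∈ Rng C W l j) :
    (C.d j k).app (op W) x ∈ Rng C W l k := by
  induction l generalizing x with
  | nil =>
    have : x = 0 := by simpa [Rng_nil] using hx
    rw [this, map_zero]
    exact Submodule.zero_mem _
  | cons o t ih =>
    rw [Rng_cons] at hx ⊢
    obtain ⟨a, ha, b, hb, rfl⟩ := Submodule.mem_sup.1 hx
    obtain ⟨y, rfl⟩ := ha
    rw [map_add]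
    apply Submodule.add_mem_sup _ (ih hb)
    rw [d_nat]
    exact ⟨_, rfl⟩

/-! #### The pushout lemma, list version -/

lemma PLlist (hfin : IsFiniteProjCx R C) (h3 : CondIII G F n) (hm : (m : ℤ) = n A.grp)
    {W : OrbitObj G F} (o : OverP n A m W) (j : ℕ) (β : (C.X j).obj (op o.1))
    (l : List (OverP n A m W))
    (hmem : (C.X j).map (pmor o).op β ∈ Rng C W l j) :
    β ∈ Rng C o.1 (l.map (toJoin h3 hm o)) j := by
  classical
  obtain ⟨g, hg, hsum⟩ := list_sum_decomp l _ _ hmem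
  -- choose preimages
  have hch : ∀ t : Fin l.length, ∃ y : (C.X j).obj (op (l.get t).1),
      (C.X j).map (pmor (l.get t)).op y = g t := by
    intro t
    exact hg t
  choose α hα using hch
  have heq : (C.X j).map (projMor W o.1 o.2.2).op β =
      ∑ t : Fin l.length, (C.X j).map (projMor W (l.get t).1 (l.get t).2.2).op (α t) := by
    rw [show (projMor W o.1 o.2.2) = pmor o from rfl]
    rw [hsum]
    congr 1
    funext t
    rw [← hα t]
    rfl
  have hPL := proj_PL (hfin.2 j) o.2.2 (fun t => (l.get t).1) (fun t => (l.get t).2.2)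
    (fun t => (toJoin h3 hm o (l.get t)).1) (fun t => le_sup_left) (fun t => rfl) β α heq
  -- now convert the `iSup` into the list sum
  refine Submodule.iSup_induction (motive := fun x => x ∈ Rng C o.1 (l.map (toJoin h3 hm o)) j)
    _ hPL ?_ (Submodule.zero_mem _) ?_
  · rintro t x ⟨w, rfl⟩
    have hmem2 : LinearMap.range ((C.X j).map (pmor (toJoin h3 hm o (l.get t))).op).hom ∈
        (l.map (toJoin h3 hm o)).map (fun o' => LinearMap.range ((C.X j).map (pmor o').op).hom) := by
      rw [List.map_map]
      exact List.mem_map.2 ⟨l.get t, l.get_mem _, rfl⟩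
    exact le_list_sum _ hmem2 ⟨w, rfl⟩
  · intro x y hx hy
    exact Submodule.add_mem _ hx hy

/-! #### Absorption -/

lemma absorb (h3 : CondIII G F n) (hm : (m : ℤ) = n A.grp) {W : OrbitObj G F}
    (o : OverP n A m W) (l : List (OverP n A m W)) (j : ℕ) (x : (C.X j).obj (op o.1))
    (hx : x ∈ Rng C o.1 (l.map (toJoin h3 hm o)) j) :
    (C.X j).map (pmor o).op x ∈ Rng C W l j := by
  induction l generalizing x with
  | nil =>
    have : x = 0 := by simpa [Rng_nil] using hx
    rw [this, map_zero]
    exact Submodule.zero_mem _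
  | cons o'' t ih =>
    rw [List.map_cons, Rng_cons] at hx
    rw [Rng_cons]
    obtain ⟨a, ha, b, hb, rfl⟩ := Submodule.mem_sup.1 hx
    obtain ⟨w, rfl⟩ := ha
    rw [map_add]
    refine Submodule.add_mem_sup ?_ (ih _ hb)
    -- a = image of w along `o.1 → join`, so its image in `W` factors through `o''`
    have h1 : (C.X j).map (pmor o).op ((C.X j).map (pmor (toJoin h3 hm o o'')).op w) =
        (C.X j).map (pmor o'').op ((C.X j).map
          (projMor o''.1 (toJoin h3 hm o o'').1 le_sup_right).op w) := by
      rw [← cm_comp, ← cm_comp]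
      congr 2
      rw [show pmor o ≫ pmor (toJoin h3 hm o o'') =
        projMor W (toJoin h3 hm o o'').1 (le_trans o.2.2 le_sup_left) from
          (projMor_comp W o.1 (toJoin h3 hm o o'').1 o.2.2 le_sup_left).symm]
      rw [show pmor o'' ≫ projMor o''.1 (toJoin h3 hm o o'').1 le_sup_right =
        projMor W (toJoin h3 hm o o'').1 (le_trans o''.2.2 le_sup_right) from
          (projMor_comp W o''.1 (toJoin h3 hm o o'').1 o''.2.2 le_sup_right).symm]
    rw [h1]
    exact ⟨_, rfl⟩


lemma Rng_mono_tail (W : OrbitObj G F) (o : OverP n A m W) (l : List (OverP n A m W)) (i : ℕ) :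
    Rng C W l i ≤ Rng C W (o :: l) i := by
  rw [Rng_cons]
  exact le_sup_right

/-- Helper for the boundary lemma: every element of `ZRng` is an image of a cycle from the
big join plus a boundary with controlled preimage. -/
lemma coreBhelp (h2 : CondII C n) {W : OrbitObj G F} (i : ℕ)
    (Jo : OverP n A m W) (l : List (OverP n A m W))
    (hle : ∀ o' ∈ l, o'.1.grp ≤ Jo.1.grp)
    (x : (C.X i).obj (op W)) (hx : x ∈ ZRng C W l i) :
    ∃ (u : (C.X i).obj (op Jo.1)) (c : (C.X (i+1)).obj (op W)),
      (C.d i (i-1)).app (op Jo.1) u = 0 ∧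
      x = (C.X i).map (pmor Jo).op u + (C.d (i+1) i).app (op W) c ∧
      c ∈ Rng C W l (i+1) := by
  induction l generalizing x with
  | nil =>
    have hx0 : x = 0 := by simpa [ZRng_nil] using hx
    exact ⟨0, 0, by simp, by simp [hx0], Submodule.zero_mem _⟩
  | cons o t ih =>
    rw [ZRng_cons] at hx
    obtain ⟨a, ha, b, hb, rfl⟩ := Submodule.mem_sup.1 hx
    obtain ⟨ζ, hζ, rfl⟩ := Submodule.mem_map.1 ha
    obtain ⟨u', c', hu', hb', hc'⟩ := ih (fun o' h => hle o' (List.mem_cons_of_mem _ h)) b hb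
    have hoJ : o.1.grp ≤ Jo.1.grp := hle o (List.mem_cons_self (a := o) (l := t))
    have hnn : n o.1.grp = n Jo.1.grp := by rw [o.2.1.2.2.2, Jo.2.1.2.2.2]
    obtain ⟨u₀, hu₀, w, hw⟩ := surjC C h2 (projMor o.1 Jo.1 hoJ) hnn i ζ
      (LinearMap.mem_ker.1 hζ)
    refine ⟨u₀ + u', c' - (C.X (i+1)).map (pmor o).op w, ?_, ?_, ?_⟩
    · rw [map_add, hu₀, hu', zero_add]
    · have hcomp : (C.X i).map (pmor o).op ((C.X i).map (projMor o.1 Jo.1 hoJ).op u₀) =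
          (C.X i).map (pmor Jo).op u₀ := by
        rw [← cm_comp]
        have hco : pmor o ≫ projMor o.1 Jo.1 hoJ = pmor Jo :=
          (projMor_comp W o.1 Jo.1 o.2.2 hoJ).symm
        rw [hco]
      have hζeq : ζ = (C.X i).map (projMor o.1 Jo.1 hoJ).op u₀
          - (C.d (i+1) i).app (op o.1) w := by
        rw [← hw]
        abel
      have hdw : (C.X i).map (pmor o).op ((C.d (i+1) i).app (op o.1) w) =
          (C.d (i+1) i).app (op W) ((C.X (i+1)).map (pmor o).op w) := (d_nat C _ _ _ w).symm
      rw [hζeq, map_sub, hcomp, hdw, hb', map_add, map_sub]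
      abel
    · refine Submodule.sub_mem _ (Rng_mono_tail C W o t (i+1) hc') ?_
      rw [Rng_cons]
      exact Submodule.mem_sup_left ⟨w, rfl⟩

/-- The boundary lemma: a sum of images of cycles which is a boundary is the boundary
of an element of the sum of images. -/
lemma coreB (h2 : CondII C n) (h3 : CondIII G F n) (hm : (m : ℤ) = n A.grp)
    {W : OrbitObj G F} (hWn : n W.grp = (m : ℤ)) (i : ℕ) (l : List (OverP n A m W))
    (x : (C.X i).obj (op W)) (hx : x ∈ ZRng C W l i)
    (hbd : ∃ y : (C.X (i+1)).obj (op W), (C.d (i+1) i).app (op W) y = x) :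
    ∃ ν ∈ Rng C W l (i+1), (C.d (i+1) i).app (op W) ν = x := by
  cases l with
  | nil =>
    refine ⟨0, Submodule.zero_mem _, ?_⟩
    have hx0 : x = 0 := by simpa [ZRng_nil] using hx
    rw [map_zero, hx0]
  | cons o t =>
    set Jo := bigJP h3 hm o t with hJo
    have hle : ∀ o' ∈ o :: t, o'.1.grp ≤ Jo.1.grp := by
      intro o' h
      rcases List.mem_cons.1 h with rfl | h'
      · exact le_bigJ_head o' t
      · exact le_bigJ_mem o t o' h'
    obtain ⟨u, c, hu, hxeq, hc⟩ := coreBhelp C h2 i Jo (o :: t) hle x hx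
    obtain ⟨y, hy⟩ := hbd
    have hnn : n W.grp = n Jo.1.grp := by rw [hWn, Jo.2.1.2.2.2]
    have hbd2 : ∃ w, (C.X i).map (pmor Jo).op u = (C.d (i+1) i).app (op W) w := by
      refine ⟨y - c, ?_⟩
      rw [map_sub, hy, hxeq]
      abel
    obtain ⟨v, hv⟩ := injC C h2 (pmor Jo) hnn i u hu hbd2
    refine ⟨(C.X (i+1)).map (pmor Jo).op v + c, ?_, ?_⟩
    · refine Submodule.add_mem _ ?_ hc
      rw [Rng_cons]
      apply Submodule.mem_sup_left
      have hco : pmor Jo = pmor o ≫ projMor o.1 Jo.1 (le_bigJ_head o t) :=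
        projMor_comp W o.1 Jo.1 o.2.2 (le_bigJ_head o t)
      rw [hco, cm_comp]
      exact ⟨_, rfl⟩
    · rw [map_add, d_nat, hv, hxeq]

/-- The main induction: lifting elements whose boundary lies in the sum of images (M),
and expressing cycles in the sum of images as sums of images of cycles (Z). -/
lemma coreMZ (hfin : IsFiniteProjCx R C) (h2 : CondII C n) (h3 : CondIII G F n)
    (hm : (m : ℤ) = n A.grp) : ∀ i : ℕ,
    (∀ (W : OrbitObj G F), n W.grp = (m : ℤ) →
      ∀ (l : List (OverP n A m W)) (y : (C.X i).obj (op W)),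
      (C.d i (i-1)).app (op W) y ∈ Rng C W l (i-1) →
      ∃ ζ c, y = ζ + c ∧ (C.d i (i-1)).app (op W) ζ = 0 ∧ c ∈ Rng C W l i)
    ∧ (∀ (W : OrbitObj G F), n W.grp = (m : ℤ) →
      ∀ (l : List (OverP n A m W)) (z : (C.X i).obj (op W)),
      (C.d i (i-1)).app (op W) z = 0 → z ∈ Rng C W l i → z ∈ ZRng C W l i) := by
  intro i
  induction i with
  | zero =>
    constructor
    · intro W hWn l y hy
      exact ⟨y, 0, (add_zero y).symm, d_zero_zero C W y, Submodule.zero_mem _⟩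
    · intro W hWn l z hz hmem
      clear hz
      induction l generalizing z with
      | nil => simpa [ZRng_nil, Rng_nil] using hmem
      | cons o t ih =>
        rw [Rng_cons] at hmem
        obtain ⟨a, ha, b, hb, rfl⟩ := Submodule.mem_sup.1 hmem
        obtain ⟨y₀, rfl⟩ := ha
        rw [ZRng_cons]
        refine Submodule.add_mem_sup (Submodule.mem_map.2
          ⟨y₀, LinearMap.mem_ker.2 (d_zero_zero C o.1 y₀), rfl⟩) (ih b hb)
  | succ i' ih =>
    obtain ⟨ihM, ihZ⟩ := ih
    have hM : ∀ (W : OrbitObj G F), n W.grp = (m : ℤ) →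
        ∀ (l : List (OverP n A m W)) (y : (C.X (i'+1)).obj (op W)),
        (C.d (i'+1) i').app (op W) y ∈ Rng C W l i' →
        ∃ ζ c, y = ζ + c ∧ (C.d (i'+1) i').app (op W) ζ = 0 ∧ c ∈ Rng C W l (i'+1) := by
      intro W hWn l y hy
      cases l with
      | nil =>
        refine ⟨y, 0, (add_zero y).symm, ?_, Submodule.zero_mem _⟩
        simpa [Rng_nil] using hy
      | cons o t =>
        rw [Rng_cons] at hy
        obtain ⟨a, ha, b, hb, hdy⟩ := Submodule.mem_sup.1 hy
        obtain ⟨h₀, rfl⟩ := ha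
        -- step 1 : the boundary of `h₀` maps into the rest of the sum
        have h1 : (C.X (i'-1)).map (pmor o).op ((C.d i' (i'-1)).app (op o.1) h₀) =
            - (C.d i' (i'-1)).app (op W) b := by
          have hdd : (C.d i' (i'-1)).app (op W) ((C.d (i'+1) i').app (op W) y) = 0 :=
            d_d_zero C W _ _ _ y
          rw [← hdy, map_add] at hdd
          rw [← d_nat]
          exact eq_neg_of_add_eq_zero_left hdd
        have h3' : (C.X (i'-1)).map (pmor o).op ((C.d i' (i'-1)).app (op o.1) h₀) ∈
            Rng C W t (i'-1) := by
          rw [h1]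
          exact Submodule.neg_mem _ (dRng C W t (i'-1) hb)
        have h4 := PLlist C hfin h3 hm o (i'-1) _ t h3'
        obtain ⟨ζ', c', hζc, hζ'0, hc'⟩ := ihM o.1 o.2.1.2.2.2 (t.map (toJoin h3 hm o)) h₀ h4
        set ξ := b + (C.X i').map (pmor o).op c' with hξ
        have hξmem : ξ ∈ Rng C W t i' :=
          Submodule.add_mem _ hb (absorb C h3 hm o t i' c' hc')
        have hdyeq : (C.d (i'+1) i').app (op W) y = (C.X i').map (pmor o).op ζ' + ξ := by
          rw [← hdy, hζc, map_add, hξ]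
          abel
        have hξcyc : (C.d i' (i'-1)).app (op W) ξ = 0 := by
          have e1 : ξ = (C.d (i'+1) i').app (op W) y - (C.X i').map (pmor o).op ζ' := by
            rw [hdyeq]
            abel
          rw [e1, map_sub, d_d_zero, d_nat, hζ'0, map_zero, sub_zero]
        have hξZ := ihZ W hWn t ξ hξcyc hξmem
        have hdyZ : (C.d (i'+1) i').app (op W) y ∈ ZRng C W (o :: t) i' := by
          rw [hdyeq, ZRng_cons]
          exact Submodule.add_mem_sup (Submodule.mem_map.2
            ⟨ζ', LinearMap.mem_ker.2 hζ'0, rfl⟩) hξZ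
        obtain ⟨ν, hν, hdν⟩ := coreB C h2 h3 hm hWn i' (o :: t) _ hdyZ ⟨y, rfl⟩
        refine ⟨y - ν, ν, by abel, ?_, hν⟩
        rw [map_sub, hdν, sub_self]
    refine ⟨hM, ?_⟩
    intro W hWn l
    induction l with
    | nil =>
      intro z hz hmem
      simpa [ZRng_nil, Rng_nil] using hmem
    | cons o t ihl =>
      intro z hzpre hmem
      have hz : (C.d (i'+1) i').app (op W) z = 0 := hzpre
      rw [Rng_cons] at hmem
      obtain ⟨a, ha, b, hb, hzeq⟩ := Submodule.mem_sup.1 hmem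
      obtain ⟨y₀, rfl⟩ := ha
      have h1 : (C.X i').map (pmor o).op ((C.d (i'+1) i').app (op o.1) y₀) =
          - (C.d (i'+1) i').app (op W) b := by
        have hdd : (C.d (i'+1) i').app (op W) ((C.X (i'+1)).map (pmor o).op y₀ + b) = 0 := by
          rw [hzeq]
          exact hz
        rw [map_add] at hdd
        rw [← d_nat]
        exact eq_neg_of_add_eq_zero_left hdd
      have h3' : (C.X i').map (pmor o).op ((C.d (i'+1) i').app (op o.1) y₀) ∈
          Rng C W t i' := by
        rw [h1]
        exact Submodule.neg_mem _ (dRng C W t i' hb)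
      have h4 := PLlist C hfin h3 hm o i' _ t h3'
      obtain ⟨ζ, c, hζc, hζ0, hc⟩ := hM o.1 o.2.1.2.2.2 (t.map (toJoin h3 hm o)) y₀ h4
      set ξ := b + (C.X (i'+1)).map (pmor o).op c with hξ
      have hξmem : ξ ∈ Rng C W t (i'+1) :=
        Submodule.add_mem _ hb (absorb C h3 hm o t (i'+1) c hc)
      have hzeq2 : (C.X (i'+1)).map (pmor o).op y₀ + b =
          (C.X (i'+1)).map (pmor o).op ζ + ξ := by
        rw [hζc, map_add, hξ]
        abel
      have hξcyc : (C.d (i'+1) i').app (op W) ξ = 0 := by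
        have e1 : ξ = ((C.X (i'+1)).map (pmor o).op y₀ + b) -
            (C.X (i'+1)).map (pmor o).op ζ := by
          rw [hzeq2]
          abel
        rw [e1, map_sub, hzeq, hz, zero_sub, d_nat, hζ0, map_zero, neg_zero]
      have hξZ := ihl ξ hξcyc hξmem
      rw [← hzeq, hzeq2, ZRng_cons]
      exact Submodule.add_mem_sup (Submodule.mem_map.2
        ⟨ζ, LinearMap.mem_ker.2 hζ0, rfl⟩) hξZ


lemma Rng_append (W : OrbitObj G F) (l₁ l₂ : List (OverP n A m W)) (i : ℕ) :
    Rng C W (l₁ ++ l₂) i = Rng C W l₁ i ⊔ Rng C W l₂ i := by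
  rw [Rng, Rng, Rng, List.map_append, List.sum_append, Submodule.add_eq_sup]

/-- Chain modules of the subgroups in the family vanish above degree `m`. -/
lemma kk_vanish [IsDomain R] (hfin : IsFiniteProjCx R C)
    {eps : C.X 0 ⟶ constR G F R} {heps : C.d 1 0 ≫ eps = 0}
    (hsph : IsHomologySphere C eps heps n)
    (htight : ∀ B : OrbitObj G F, SubconjLT G A.grp B.grp → TightAt C B)
    {K : OrbitObj G F} (hK : K.grp ∈ KKs n A m) (j : ℕ) (hj : (m : ℤ) < (j : ℤ))
    (x : (C.X j).obj (op K)) : x = 0 := by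
  have hlt : SubconjLT G A.grp K.grp := ⟨subconj_of_le hK.2.1, hK.2.2.1⟩
  apply isZero_eq_zero
  apply tight_vanish_module (heps := heps) hfin K (hsph K) (htight K hlt) j
  rw [hK.2.2.2]
  exact hj

lemma Rng_top_zero [IsDomain R] (hfin : IsFiniteProjCx R C)
    {eps : C.X 0 ⟶ constR G F R} {heps : C.d 1 0 ≫ eps = 0}
    (hsph : IsHomologySphere C eps heps n)
    (htight : ∀ B : OrbitObj G F, SubconjLT G A.grp B.grp → TightAt C B)
    {W : OrbitObj G F} (l : List (OverP n A m W)) (j : ℕ) (hj : (m : ℤ) < (j : ℤ))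
    (x : (C.X j).obj (op W)) (hx : x ∈ Rng C W l j) : x = 0 := by
  induction l generalizing x with
  | nil => simpa [Rng_nil] using hx
  | cons o t ih =>
    rw [Rng_cons] at hx
    obtain ⟨a, ha, b, hb, rfl⟩ := Submodule.mem_sup.1 hx
    obtain ⟨y, rfl⟩ := ha
    rw [kk_vanish C hfin hsph htight o.2.1 j hj y, map_zero, zero_add]
    exact ih b hb

end Core


section Statements

/-- vanishing of `H_{n+1}(S_H C)` for the splitting quotient. -/
theorem stmt11 [IsDomain R] [IsPrincipalIdealRing R]
    (hF : IsClosedFamily G F) (C : OrbCx G F R)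
    (eps : C.X 0 ⟶ constR G F R) (heps : C.d 1 0 ≫ eps = 0)
    (n : Subgroup G → ℤ) (hn : IsSuperClass G F n)
    (hfin : IsFiniteProjCx R C) (hsph : IsHomologySphere C eps heps n)
    (h1 : CondI G n) (h2 : CondII C n) (h3 : CondIII G F n)
    (A : OrbitObj G F)
    (htight : ∀ B : OrbitObj G F, SubconjLT G A.grp B.grp → TightAt C B)
    (m : ℕ) (hm : (m : ℤ) = n A.grp) :
    IsZero ((subQuotCx (evalCx C A)
        (rangeN C A
          (fun k : (Σ B : {B : OrbitObj G F // SubconjLT G A.grp B.grp}, (A ⟶ B.1)) => k.1.1)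
          (fun k => k.2))
        (rangeN_compat C A
          (fun k : (Σ B : {B : OrbitObj G F // SubconjLT G A.grp B.grp}, (A ⟶ B.1)) => k.1.1)
          (fun k => k.2))).homology (m + 1)) := by
  apply isZero_homology_of_concrete
  intro q hq
  obtain ⟨x, rfl⟩ := Submodule.Quotient.mk_surjective _ q
  -- the boundary of `x` lies in `N_m`
  have hq' : Submodule.Quotient.mk ((C.d (m+1) m).app (op A) x) =
      (0 : ((C.X m).obj (op A) ⧸ (rangeN C A
        (fun k : (Σ B : {B : OrbitObj G F // SubconjLT G A.grp B.grp}, (A ⟶ B.1)) => k.1.1)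
        (fun k => k.2) m))) := hq
  replace hq' := (Submodule.Quotient.mk_eq_zero _).1 hq'
  set z := (C.d (m+1) m).app (op A) x with hzdef
  have hq'' : z ∈ ⨆ (k : Σ B : {B : OrbitObj G F // SubconjLT G A.grp B.grp}, (A ⟶ B.1)),
      LinearMap.range ((C.X m).map (k.2).op).hom := hq'
  -- convert the membership into a list of packages
  have hlist : ∃ lA : List (OverP n A m A), z ∈ Rng C A lA m := by
    refine Submodule.iSup_induction
      (motive := fun z' => ∃ lA : List (OverP n A m A), z' ∈ Rng C A lA m) _ hq'' ?_
      ⟨[], Submodule.zero_mem _⟩ ?_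
    · rintro k x₀ hx₀
      obtain ⟨w, rfl⟩ := hx₀
      obtain ⟨⟨B, hBlt⟩, f⟩ := k
      obtain ⟨K, a, hKgrp, hle, φ, hffact⟩ := exists_factorization hF f
      have hnK : n K.grp = n B.grp := by rw [hKgrp]; exact hn.1 a B.grp
      by_cases hcase : n B.grp = (m : ℤ)
      · have hnsc : ¬ Subconj G K.grp A.grp := by
          intro hc
          apply hBlt.2
          refine subconj_trans ?_ hc
          exact ⟨a, le_of_eq hKgrp.symm⟩
        refine ⟨[(⟨K, ⟨⟨K.mem, hle, hnsc, by rw [hnK, hcase]⟩, hle⟩⟩ : OverP n A m A)], ?_⟩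
        rw [hffact, cm_comp]
        erw [Rng_cons]
        exact Submodule.mem_sup_left ⟨(C.X m).map φ.op w, rfl⟩
      · refine ⟨[], ?_⟩
        have hBle : n B.grp < (m : ℤ) := by
          have hle1 := h1 A.grp B.grp hBlt.1
          rw [← hm] at hle1
          exact lt_of_le_of_ne hle1 hcase
        have hw : w = 0 := by
          apply isZero_eq_zero
          exact tight_vanish_module (heps := heps) hfin B (hsph B) (htight B hBlt) m hBle
        rw [hw, map_zero]
        exact Submodule.zero_mem _
    · rintro y₁ y₂ ⟨l₁, h₁⟩ ⟨l₂, h₂⟩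
      exact ⟨l₁ ++ l₂, by rw [Rng_append]; exact Submodule.add_mem_sup h₁ h₂⟩
  obtain ⟨lA, hmem⟩ := hlist
  -- `z` is a cycle
  have hcyc : (C.d m (m-1)).app (op A) z = 0 := d_d_zero C A (m+1) m (m-1) x
  have hWn : n A.grp = (m : ℤ) := hm.symm
  -- apply the core lemmas
  have hZ := (coreMZ C hfin h2 h3 hm m).2 A hWn lA z hcyc hmem
  obtain ⟨ν, hν, hdν⟩ := coreB C h2 h3 hm hWn m lA z hZ ⟨x, hzdef.symm⟩
  have hν0 : ν = 0 := Rng_top_zero C hfin hsph htight lA (m+1)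
    (by exact_mod_cast Nat.lt_succ_self m) ν hν
  have hz0 : z = 0 := by rw [← hdν, hν0, map_zero]
  -- `x` is a cycle, hence a boundary since `H_{m+1}(C(A)) = 0`
  obtain ⟨m', hm', hvan, hiso⟩ := hsph A
  have hm'' : m' = m + 1 := by
    have h5 : (m' : ℤ) = (m : ℤ) + 1 := by rw [hm', ← hm]
    exact_mod_cast h5
  have hex : IsZero ((evalCx C A).homology (m+1)) := by
    apply plain_isZero_of_aug
    apply hvan (m+2)
    omega
  have hxc : (C.d (m+1) m).app (op A) x = 0 := by rw [← hzdef]; exact hz0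
  obtain ⟨y, hy⟩ := isZero_homology_concrete _ (m+1) hex x hxc
  refine ⟨Submodule.Quotient.mk y, ?_⟩
  exact congrArg Submodule.Quotient.mk hy

end Statements

end OrbitPaper
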